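/- arXiv:1401.0815 — 6 statements merged into one kernel-verified Lean document; each statement's English description precedes it below -/
import Mathlib

section
/- For every nonnegative integer n and every real x, (1/√(2π)) ∫_{-∞}^{∞} H_n(y) e^{-y²/2} e^{ixy} dy = iⁿ H_n(x) e^{-x²/2} (an identity of complex numbers, where the integral is a complex-valued integral over the real line). -/
open MeasureTheory Finset

/-- Physicists' Hermite polynomial
`H_n(x) = n! · Σ_{m=0}^{⌊n/2⌋} (-1)^m (2x)^{n-2m} / (m! (n-2m)!)`. -/
noncomputable def hermiteH (n : ℕ) (x : ℝ) : ℝ :=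
  (n.factorial : ℝ) * ∑ m ∈ Finset.range (n / 2 + 1),
    (-1 : ℝ) ^ m * (2 * x) ^ (n - 2 * m) /
      ((m.factorial : ℝ) * ((n - 2 * m).factorial : ℝ))

open Filter Complex Topology

lemma hermiteH_zero (x : ℝ) : hermiteH 0 x = 1 := by simp [hermiteH]

lemma hermiteH_one (x : ℝ) : hermiteH 1 x = 2 * x := by simp [hermiteH]

lemma key_term (m j : ℕ) (x : ℝ) :
    ((2*m+j+3).factorial : ℝ) * ((-1)^(m+1) * (2*x)^(j+1) / (((m+1).factorial : ℝ) * ((j+1).factorial : ℝ)))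
    = 2*x*((2*m+j+2).factorial : ℝ) * ((-1)^(m+1) * (2*x)^j / (((m+1).factorial : ℝ) * ((j.factorial : ℝ))))
    - 2*((2*m+j+2) : ℝ)*((2*m+j+1).factorial : ℝ) * ((-1)^m * (2*x)^(j+1) / ((m.factorial : ℝ) * ((j+1).factorial : ℝ))) := by
  have f1 : ((2*m+j+3).factorial : ℝ) = (2*m+j+3) * ((2*m+j+2).factorial : ℝ) := by
    rw [show 2*m+j+3 = (2*m+j+2)+1 by omega]; push_cast [Nat.factorial_succ]; ring
  have f2 : ((2*m+j+2).factorial : ℝ) = (2*m+j+2) * ((2*m+j+1).factorial : ℝ) := by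
    rw [show 2*m+j+2 = (2*m+j+1)+1 by omega]; push_cast [Nat.factorial_succ]; ring
  have f3 : ((j+1).factorial : ℝ) = (j+1) * (j.factorial : ℝ) := by
    push_cast [Nat.factorial_succ]; ring
  have f4 : ((m+1).factorial : ℝ) = (m+1) * (m.factorial : ℝ) := by
    push_cast [Nat.factorial_succ]; ring
  have h1 : (m.factorial : ℝ) ≠ 0 := Nat.cast_ne_zero.2 (Nat.factorial_ne_zero m)
  have h2 : (j.factorial : ℝ) ≠ 0 := Nat.cast_ne_zero.2 (Nat.factorial_ne_zero j)
  rw [f1, f2, f3, f4]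
  have hm1 : ((m:ℝ)+1) ≠ 0 := by positivity
  have hj1 : ((j:ℝ)+1) ≠ 0 := by positivity
  field_simp
  ring

lemma hermiteH_rec (n : ℕ) (x : ℝ) :
    hermiteH (n+2) x = 2*x*hermiteH (n+1) x - 2*(n+1)*hermiteH n x := by
  rcases Nat.even_or_odd n with ⟨k, hk⟩ | ⟨k, hk⟩
  · -- n = k + k
    subst hk
    unfold hermiteH
    have r2 : (k+k+2)/2 + 1 = k+2 := by omega
    have r1 : (k+k+1)/2 + 1 = k+1 := by omega
    have r0 : (k+k)/2 + 1 = k+1 := by omega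
    rw [r2, r1, r0]
    rw [Finset.sum_range_succ' (fun m => (-1:ℝ)^m * (2*x)^(k+k+2-2*m) / ((m.factorial:ℝ) * ((k+k+2-2*m).factorial:ℝ))) (k+1)]
    rw [Finset.sum_range_succ (fun m => (-1:ℝ)^(m+1) * (2*x)^(k+k+2-2*(m+1)) / (((m+1).factorial:ℝ) * ((k+k+2-2*(m+1)).factorial:ℝ))) k]
    rw [Finset.sum_range_succ' (fun m => (-1:ℝ)^m * (2*x)^(k+k+1-2*m) / ((m.factorial:ℝ) * ((k+k+1-2*m).factorial:ℝ))) k]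
    rw [Finset.sum_range_succ (fun m => (-1:ℝ)^m * (2*x)^(k+k-2*m) / ((m.factorial:ℝ) * ((k+k-2*m).factorial:ℝ))) k]
    have main : ((k+k+2).factorial : ℝ) * ∑ m ∈ Finset.range k,
          (-1:ℝ)^(m+1) * (2*x)^(k+k+2-2*(m+1)) / (((m+1).factorial:ℝ) * ((k+k+2-2*(m+1)).factorial:ℝ))
        = 2*x*((k+k+1).factorial : ℝ) * ∑ m ∈ Finset.range k,
          (-1:ℝ)^(m+1) * (2*x)^(k+k+1-2*(m+1)) / (((m+1).factorial:ℝ) * ((k+k+1-2*(m+1)).factorial:ℝ))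
        - 2*((k:ℝ)+(k:ℝ)+1)*((k+k).factorial : ℝ) * ∑ m ∈ Finset.range k,
          (-1:ℝ)^m * (2*x)^(k+k-2*m) / ((m.factorial:ℝ) * ((k+k-2*m).factorial:ℝ)) := by
      rw [Finset.mul_sum, Finset.mul_sum, Finset.mul_sum, ← Finset.sum_sub_distrib]
      refine Finset.sum_congr rfl (fun m hm => ?_)
      have hmk : m < k := Finset.mem_range.1 hm
      set j := k + k - 2*m - 1 with hj
      have e1 : k+k+2-2*(m+1) = j+1 := by omega
      have e2 : k+k+1-2*(m+1) = j := by omega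
      have e3 : k+k-2*m = j+1 := by omega
      have e4 : k+k+2 = 2*m+j+3 := by omega
      have e5 : k+k+1 = 2*m+j+2 := by omega
      have e6 : (k:ℝ)+(k:ℝ)+1 = ((2*m+j+2 : ℕ) : ℝ) := by exact_mod_cast e5
      have e7 : k+k = 2*m+j+1 := by omega
      rw [e1, e2, e3, e4, e5, e6, e7]
      push_cast; linear_combination key_term m j x
    -- boundary identities
    have hb0 : ((k+k+2).factorial : ℝ) * ((-1:ℝ)^0 * (2*x)^(k+k+2-2*0) / (((0:ℕ).factorial:ℝ) * ((k+k+2-2*0).factorial:ℝ)))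
        = 2*x*((k+k+1).factorial : ℝ) * ((-1:ℝ)^0 * (2*x)^(k+k+1-2*0) / (((0:ℕ).factorial:ℝ) * ((k+k+1-2*0).factorial:ℝ))) := by
      simp only [pow_zero, Nat.mul_zero, Nat.sub_zero, Nat.factorial_zero, Nat.cast_one, one_mul]
      have : (k+k+2) = (k+k+1)+1 := by omega
      rw [this, Nat.factorial_succ, pow_succ]
      have h1 : (((k+k+1).factorial:ℝ)) ≠ 0 := Nat.cast_ne_zero.2 (Nat.factorial_ne_zero _)
      push_cast
      field_simp
    have hbk : ((k+k+2).factorial : ℝ) * ((-1:ℝ)^(k+1) * (2*x)^(k+k+2-2*(k+1)) / (((k+1).factorial:ℝ) * ((k+k+2-2*(k+1)).factorial:ℝ)))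
        = - (2*((k:ℝ)+(k:ℝ)+1)*((k+k).factorial : ℝ) * ((-1:ℝ)^k * (2*x)^(k+k-2*k) / ((k.factorial:ℝ) * ((k+k-2*k).factorial:ℝ)))) := by
      have e1 : k+k+2-2*(k+1) = 0 := by omega
      have e2 : k+k-2*k = 0 := by omega
      rw [e1, e2]
      have f1 : ((k+k+2).factorial : ℝ) = (2*(k:ℝ)+2) * (2*(k:ℝ)+1) * ((k+k).factorial : ℝ) := by
        rw [show k+k+2 = (k+k+1)+1 by omega]
        rw [Nat.factorial_succ, show k+k+1 = (k+k)+1 by omega, Nat.factorial_succ]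
        push_cast; ring
      have f4 : ((k+1).factorial : ℝ) = ((k:ℝ)+1) * (k.factorial : ℝ) := by
        push_cast [Nat.factorial_succ]; ring
      rw [f1, f4, pow_succ]
      have h1 : (k.factorial : ℝ) ≠ 0 := Nat.cast_ne_zero.2 (Nat.factorial_ne_zero _)
      have h2 : ((k:ℝ)+1) ≠ 0 := by positivity
      simp only [Nat.factorial_zero, Nat.cast_one, pow_zero]
      field_simp
      ring
    push_cast at main hb0 hbk ⊢
    linear_combination main + hb0 + hbk
  · -- n = 2k+1
    subst hk
    unfold hermiteH
    have r2 : (2*k+1+2)/2 + 1 = k+2 := by omega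
    have r1 : (2*k+1+1)/2 + 1 = k+2 := by omega
    have r0 : (2*k+1)/2 + 1 = k+1 := by omega
    rw [r2, r1, r0]
    rw [Finset.sum_range_succ' (fun m => (-1:ℝ)^m * (2*x)^(2*k+1+2-2*m) / ((m.factorial:ℝ) * ((2*k+1+2-2*m).factorial:ℝ))) (k+1)]
    rw [Finset.sum_range_succ' (fun m => (-1:ℝ)^m * (2*x)^(2*k+1+1-2*m) / ((m.factorial:ℝ) * ((2*k+1+1-2*m).factorial:ℝ))) (k+1)]
    have main : ((2*k+1+2).factorial : ℝ) * ∑ m ∈ Finset.range (k+1),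
          (-1:ℝ)^(m+1) * (2*x)^(2*k+1+2-2*(m+1)) / (((m+1).factorial:ℝ) * ((2*k+1+2-2*(m+1)).factorial:ℝ))
        = 2*x*((2*k+1+1).factorial : ℝ) * ∑ m ∈ Finset.range (k+1),
          (-1:ℝ)^(m+1) * (2*x)^(2*k+1+1-2*(m+1)) / (((m+1).factorial:ℝ) * ((2*k+1+1-2*(m+1)).factorial:ℝ))
        - 2*(2*(k:ℝ)+1+1)*((2*k+1).factorial : ℝ) * ∑ m ∈ Finset.range (k+1),
          (-1:ℝ)^m * (2*x)^(2*k+1-2*m) / ((m.factorial:ℝ) * ((2*k+1-2*m).factorial:ℝ)) := by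
      rw [Finset.mul_sum, Finset.mul_sum, Finset.mul_sum, ← Finset.sum_sub_distrib]
      refine Finset.sum_congr rfl (fun m hm => ?_)
      have hmk : m < k + 1 := Finset.mem_range.1 hm
      set j := 2*k - 2*m with hj
      have e1 : 2*k+1+2-2*(m+1) = j+1 := by omega
      have e2 : 2*k+1+1-2*(m+1) = j := by omega
      have e3 : 2*k+1-2*m = j+1 := by omega
      have e4 : 2*k+1+2 = 2*m+j+3 := by omega
      have e5 : 2*k+1+1 = 2*m+j+2 := by omega
      have e6 : 2*(k:ℝ)+1+1 = ((2*m+j+2 : ℕ) : ℝ) := by exact_mod_cast e5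
      have e7 : 2*k+1 = 2*m+j+1 := by omega
      rw [e1, e2, e3, e4, e5, e6, e7]
      push_cast; linear_combination key_term m j x
    have hb0 : ((2*k+1+2).factorial : ℝ) * ((-1:ℝ)^0 * (2*x)^(2*k+1+2-2*0) / (((0:ℕ).factorial:ℝ) * ((2*k+1+2-2*0).factorial:ℝ)))
        = 2*x*((2*k+1+1).factorial : ℝ) * ((-1:ℝ)^0 * (2*x)^(2*k+1+1-2*0) / (((0:ℕ).factorial:ℝ) * ((2*k+1+1-2*0).factorial:ℝ))) := by
      simp only [pow_zero, Nat.mul_zero, Nat.sub_zero, Nat.factorial_zero, Nat.cast_one, one_mul]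
      have : (2*k+1+2) = (2*k+1+1)+1 := by omega
      rw [this, Nat.factorial_succ, pow_succ]
      have h1 : (((2*k+1+1).factorial:ℝ)) ≠ 0 := Nat.cast_ne_zero.2 (Nat.factorial_ne_zero _)
      push_cast
      field_simp
    push_cast at main hb0 ⊢
    linear_combination main + hb0

lemma hermiteH_hasDerivAt (n : ℕ) (x : ℝ) :
    HasDerivAt (fun y => hermiteH n y) (2*n*hermiteH (n-1) x) x := by
  induction n using Nat.twoStepInduction generalizing x with
  | zero =>
    simp only [show (fun y => hermiteH 0 y) = (fun _ : ℝ => (1:ℝ)) from funext hermiteH_zero,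
      Nat.cast_zero]
    simpa using hasDerivAt_const x (1:ℝ)
  | one =>
    simp only [show (fun y => hermiteH 1 y) = (fun y : ℝ => 2*y) from funext hermiteH_one,
      Nat.cast_one]
    rw [show (1:ℕ)-1 = 0 from rfl, hermiteH_zero]
    norm_num
    simpa using (hasDerivAt_id x).const_mul (2:ℝ)
  | more n ih0 ih1 =>
    simp only [show (fun y => hermiteH (n+2) y)
        = (fun y => 2*y*hermiteH (n+1) y - 2*((n:ℝ)+1)*hermiteH n y)
      from funext (hermiteH_rec n), Nat.add_sub_cancel]
    have h1 := ih1 x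
    have h0 := ih0 x
    simp only [Nat.add_sub_cancel] at h1
    have hx : HasDerivAt (fun y : ℝ => 2*y) 2 x := by
      simpa using (hasDerivAt_id x).const_mul (2:ℝ)
    have key := (hx.mul h1).sub (h0.const_mul (2*((n:ℝ)+1)))
    refine key.congr_deriv (Eq.symm ?_)
    cases n with
    | zero => simp [hermiteH_one, hermiteH_zero]; ring
    | succ p =>
      have hr := hermiteH_rec p x
      simp only [Nat.add_sub_cancel]
      push_cast
      linear_combination (2*((p:ℝ)+2)) * hr

noncomputable def Ef (x y : ℝ) : ℂ :=
  Complex.exp (-(y:ℂ)^2/2) * Complex.exp (Complex.I*x*y)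

lemma cont_Ef (x : ℝ) : Continuous (fun y : ℝ => Ef x y) := by
  unfold Ef; fun_prop

lemma norm_Ef (x y : ℝ) : ‖Ef x y‖ = Real.exp (-y^2/2) := by
  have e1 : (-(y:ℂ)^2/2) = ((-y^2/2 : ℝ) : ℂ) := by push_cast; ring
  have e2 : (Complex.I*(x:ℂ)*(y:ℂ)) = ((x*y : ℝ):ℂ) * Complex.I := by push_cast; ring
  rw [Ef, e1, e2, norm_mul, Complex.norm_exp,
    Complex.norm_exp]
  simp [← Complex.ofReal_pow]

lemma tendsto_pow_gauss (k : ℕ) :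
    Tendsto (fun t : ℝ => t^k * Real.exp (-t^2/2)) atTop (𝓝 0) := by
  have h1 : Tendsto (fun t : ℝ => t^2/2) atTop atTop :=
    (tendsto_pow_atTop (two_ne_zero)).atTop_div_const (by norm_num)
  have h2 : Tendsto (fun t : ℝ => (t^2/2)^k * Real.exp (-(t^2/2))) atTop (𝓝 0) :=
    (Real.tendsto_pow_mul_exp_neg_atTop_nhds_zero k).comp h1
  refine tendsto_of_tendsto_of_tendsto_of_le_of_le' tendsto_const_nhds h2 ?_ ?_
  · filter_upwards [eventually_ge_atTop (0:ℝ)] with t ht; positivity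
  · filter_upwards [eventually_ge_atTop (2:ℝ)] with t ht
    have h0 : (0:ℝ) ≤ t := by linarith
    have hle : t^k ≤ (t^2/2)^k := pow_le_pow_left₀ h0 (by nlinarith) k
    have := mul_le_mul_of_nonneg_right hle (Real.exp_nonneg (-t^2/2))
    calc t^k * Real.exp (-t^2/2) ≤ (t^2/2)^k * Real.exp (-t^2/2) := this
    _ = (t^2/2)^k * Real.exp (-(t^2/2)) := by rw [neg_div]

lemma tendsto_abs_pow_gauss (k : ℕ) {l : Filter ℝ}
    (hl : Tendsto (fun y : ℝ => |y|) l atTop) :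
    Tendsto (fun y : ℝ => |y|^k * Real.exp (-y^2/2)) l (𝓝 0) := by
  have := (tendsto_pow_gauss k).comp hl
  refine this.congr fun y => ?_
  simp [Function.comp, sq_abs, neg_div]

lemma gauss_int (k : ℕ) : Integrable (fun y : ℝ => |y|^k * Real.exp (-y^2/2)) := by
  have hs : (-1:ℝ) < (k:ℝ) := lt_of_lt_of_le (by norm_num) (Nat.cast_nonneg k)
  have h := (integrable_rpow_mul_exp_neg_mul_sq (b := (1:ℝ)/2) (by norm_num) hs).abs
  refine h.congr (Eventually.of_forall fun y => ?_)
  show |y ^ ((k:ℕ):ℝ) * Real.exp (-(1/2) * y^2)| = |y|^k * Real.exp (-y^2/2)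
  rw [abs_mul, Real.rpow_natCast, _root_.abs_pow, _root_.abs_of_nonneg (Real.exp_nonneg _)]
  ring_nf

lemma int_pow (k : ℕ) (x : ℝ) : Integrable fun y : ℝ => (y:ℂ)^k * Ef x y := by
  refine (gauss_int k).mono' ?_ ?_
  · exact ((Complex.continuous_ofReal.pow k).mul (cont_Ef x)).aestronglyMeasurable
  · filter_upwards with y
    rw [norm_mul, norm_pow, Complex.norm_real, Real.norm_eq_abs, norm_Ef]

noncomputable def HC (n m : ℕ) : ℂ :=
  (((n.factorial : ℝ) * ((-1:ℝ)^m * 2^(n-2*m) /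
    ((m.factorial:ℝ) * ((n-2*m).factorial:ℝ))) : ℝ) : ℂ)

lemma H_sum (n : ℕ) (y : ℝ) :
    ((hermiteH n y : ℝ) : ℂ) = ∑ m ∈ Finset.range (n/2+1), HC n m * (y:ℂ)^(n-2*m) := by
  rw [hermiteH]; push_cast [HC]; rw [Finset.mul_sum]
  refine Finset.sum_congr rfl fun m _ => ?_
  rw [mul_pow]; push_cast; ring

lemma int_H (n : ℕ) (x : ℝ) :
    Integrable fun y : ℝ => ((hermiteH n y : ℝ):ℂ) * Ef x y := by
  have e : (fun y : ℝ => ((hermiteH n y : ℝ):ℂ) * Ef x y)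
      = fun y : ℝ => ∑ m ∈ Finset.range (n/2+1), HC n m * ((y:ℂ)^(n-2*m) * Ef x y) := by
    funext y; rw [H_sum, Finset.sum_mul]
    exact Finset.sum_congr rfl fun m _ => by ring
  rw [e]; exact integrable_finset_sum _ fun m _ => (int_pow _ x).const_mul _

lemma int_yH (n : ℕ) (x : ℝ) :
    Integrable fun y : ℝ => (y:ℂ) * (((hermiteH n y : ℝ):ℂ) * Ef x y) := by
  have e : (fun y : ℝ => (y:ℂ) * (((hermiteH n y : ℝ):ℂ) * Ef x y))
      = fun y : ℝ => ∑ m ∈ Finset.range (n/2+1), HC n m * ((y:ℂ)^(n-2*m+1) * Ef x y) := by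
    funext y; rw [H_sum, Finset.sum_mul, Finset.mul_sum]
    exact Finset.sum_congr rfl fun m _ => by rw [pow_succ]; ring
  rw [e]; exact integrable_finset_sum _ fun m _ => (int_pow _ x).const_mul _

lemma tend_H (n : ℕ) (x : ℝ) {l : Filter ℝ}
    (hl : Tendsto (fun y : ℝ => |y|) l atTop) :
    Tendsto (fun y : ℝ => ((hermiteH n y : ℝ):ℂ) * Ef x y) l (𝓝 0) := by
  have hbound : ∀ y : ℝ, ‖((hermiteH n y:ℝ):ℂ) * Ef x y‖
      ≤ ∑ m ∈ Finset.range (n/2+1), ‖HC n m‖ * (|y|^(n-2*m) * Real.exp (-y^2/2)) := by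
    intro y
    rw [H_sum, Finset.sum_mul]
    refine (norm_sum_le _ _).trans (Finset.sum_le_sum fun m _ => le_of_eq ?_)
    rw [mul_assoc, norm_mul, norm_mul, norm_pow, Complex.norm_real, Real.norm_eq_abs, norm_Ef]
  have hsum : Tendsto (fun y : ℝ => ∑ m ∈ Finset.range (n/2+1),
      ‖HC n m‖ * (|y|^(n-2*m) * Real.exp (-y^2/2))) l (𝓝 0) := by
    have := tendsto_finset_sum (Finset.range (n/2+1))
      (fun m _ => ((tendsto_abs_pow_gauss (n-2*m) hl).const_mul (‖HC n m‖)))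
    simpa using this
  exact squeeze_zero_norm hbound hsum

lemma integral_deriv_eq_zero (F G : ℝ → ℂ) (hd : ∀ y, HasDerivAt F (G y) y)
    (hi : Integrable G) (ht : Tendsto F atTop (𝓝 0)) (hb : Tendsto F atBot (𝓝 0)) :
    ∫ y : ℝ, G y = 0 := by
  have h1 : ∫ y in Set.Iic (0:ℝ), G y = F 0 - 0 :=
    integral_Iic_of_hasDerivAt_of_tendsto (hd 0).continuousAt.continuousWithinAt
      (fun y _ => hd y) hi.integrableOn hb
  have h2 : ∫ y in Set.Ioi (0:ℝ), G y = 0 - F 0 :=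
    integral_Ioi_of_hasDerivAt_of_tendsto (hd 0).continuousAt.continuousWithinAt
      (fun y _ => hd y) hi.integrableOn ht
  rw [← intervalIntegral.integral_Iic_add_Ioi hi.integrableOn hi.integrableOn, h1, h2]; ring

lemma Ef_hasDeriv (x y : ℝ) :
    HasDerivAt (fun y : ℝ => Ef x y) ((Complex.I*x - y) * Ef x y) y := by
  have hψ : ∀ z : ℂ, HasDerivAt
      (fun z : ℂ => Complex.exp (-z^2/2) * Complex.exp (Complex.I*x*z))
      ((Complex.I*x - z) * (Complex.exp (-z^2/2) * Complex.exp (Complex.I*x*z))) z := by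
    intro z
    have h1 : HasDerivAt (fun z : ℂ => -z^2/2) (-z) z := by
      have := ((hasDerivAt_pow 2 z).neg).div_const (2:ℂ)
      refine this.congr_deriv (Eq.symm ?_)
      norm_num
      try ring
    have h2 : HasDerivAt (fun z : ℂ => Complex.I*x*z) (Complex.I*x) z := by
      simpa using (hasDerivAt_id z).const_mul (Complex.I*(x:ℂ))
    have := (h1.cexp).mul (h2.cexp)
    refine this.congr_deriv (Eq.symm ?_)
    ring
  exact (hψ y).comp_ofReal

lemma ibp (k : ℕ) (x : ℝ) :
    ∫ y : ℝ, (y:ℂ) * (((hermiteH k y : ℝ):ℂ) * Ef x y)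
      = Complex.I*x * (∫ y : ℝ, ((hermiteH k y:ℝ):ℂ) * Ef x y)
        + (2*(k:ℂ)) * ∫ y : ℝ, ((hermiteH (k-1) y:ℝ):ℂ) * Ef x y := by
  have hd : ∀ y : ℝ, HasDerivAt (fun y : ℝ => ((hermiteH k y:ℝ):ℂ) * Ef x y)
      (((2*k*hermiteH (k-1) y : ℝ):ℂ) * Ef x y
        + Complex.I*x*(((hermiteH k y:ℝ):ℂ) * Ef x y)
        - (y:ℂ)*(((hermiteH k y:ℝ):ℂ) * Ef x y)) y := by
    intro y
    have h1 := (hermiteH_hasDerivAt k y).ofReal_comp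
    have h2 := Ef_hasDeriv x y
    have := h1.mul h2
    refine this.congr_deriv (Eq.symm ?_)
    push_cast; ring
  have hi1 : Integrable (fun y : ℝ => ((2*k*hermiteH (k-1) y : ℝ):ℂ) * Ef x y) := by
    have := (int_H (k-1) x).const_mul ((2*(k:ℝ) : ℝ):ℂ)
    refine this.congr (Eventually.of_forall fun y => ?_)
    push_cast; ring
  have hi2 : Integrable (fun y : ℝ => Complex.I*x*(((hermiteH k y:ℝ):ℂ) * Ef x y)) :=
    (int_H k x).const_mul _
  have hi12 : Integrable (fun y : ℝ => ((2*k*hermiteH (k-1) y : ℝ):ℂ) * Ef x y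
      + Complex.I*x*(((hermiteH k y:ℝ):ℂ) * Ef x y)) := hi1.add hi2
  have hG : Integrable (fun y : ℝ => ((2*k*hermiteH (k-1) y : ℝ):ℂ) * Ef x y
      + Complex.I*x*(((hermiteH k y:ℝ):ℂ) * Ef x y)
      - (y:ℂ)*(((hermiteH k y:ℝ):ℂ) * Ef x y)) := hi12.sub (int_yH k x)
  have hzero : ∫ y : ℝ, (((2*k*hermiteH (k-1) y : ℝ):ℂ) * Ef x y
      + Complex.I*x*(((hermiteH k y:ℝ):ℂ) * Ef x y)
      - (y:ℂ)*(((hermiteH k y:ℝ):ℂ) * Ef x y)) = 0 :=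
    integral_deriv_eq_zero _ _ hd hG (tend_H k x tendsto_abs_atTop_atTop)
      (tend_H k x tendsto_abs_atBot_atTop)
  rw [integral_sub hi12 (int_yH k x), integral_add hi1 hi2, integral_const_mul] at hzero
  have hfirst : ∫ y : ℝ, ((2*k*hermiteH (k-1) y : ℝ):ℂ) * Ef x y
      = (2*(k:ℂ)) * ∫ y : ℝ, ((hermiteH (k-1) y:ℝ):ℂ) * Ef x y := by
    rw [← integral_const_mul]
    exact integral_congr_ae (Eventually.of_forall fun y => by push_cast; ring)
  rw [hfirst] at hzero
  linear_combination -hzero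

lemma base0 (x : ℝ) : ∫ y : ℝ, ((hermiteH 0 y:ℝ):ℂ) * Ef x y
    = ((Real.sqrt (2*Real.pi) : ℝ) : ℂ) * Complex.exp (-(x:ℂ)^2/2) := by
  have h1 := fourierIntegral_gaussian (b := (1/2:ℂ)) (by norm_num) (x:ℂ)
  have e : ∀ y : ℝ, ((hermiteH 0 y:ℝ):ℂ) * Ef x y
      = Complex.exp (Complex.I*(x:ℂ)*(y:ℂ)) * Complex.exp (-(1/2:ℂ)*(y:ℂ)^2) := fun y => by
    rw [hermiteH_zero, Ef, show -(y:ℂ)^2/2 = -(1/2:ℂ)*(y:ℂ)^2 by ring]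
    push_cast; ring
  rw [integral_congr_ae (Eventually.of_forall e), h1]
  congr 1
  · have h2 : ((Real.pi:ℂ))/(1/2:ℂ) = ((2*Real.pi : ℝ):ℂ) := by push_cast; ring
    rw [h2, show ((1:ℂ)/2) = (((1:ℝ)/2:ℝ):ℂ) by norm_num,
      ← Complex.ofReal_cpow (by positivity), Real.sqrt_eq_rpow]
  · norm_num

lemma aux0 (x : ℝ) :
    (1/(Real.sqrt (2*Real.pi)) : ℂ) * ∫ y : ℝ, ((hermiteH 0 y:ℝ):ℂ) * Ef x y
      = Complex.exp (-(x:ℂ)^2/2) := by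
  have hsq : (Real.sqrt (2*Real.pi)) ≠ 0 := (Real.sqrt_pos.mpr (by positivity)).ne'
  have hC : ((Real.sqrt (2*Real.pi):ℝ):ℂ) ≠ 0 := Complex.ofReal_ne_zero.mpr hsq
  rw [base0, ← mul_assoc, one_div, inv_mul_cancel₀ hC, one_mul]

lemma main_aux (x : ℝ) (n : ℕ) :
    (1/(Real.sqrt (2*Real.pi)) : ℂ) * ∫ y : ℝ, ((hermiteH n y:ℝ):ℂ) * Ef x y
      = Complex.I^n * ((hermiteH n x:ℝ):ℂ) * Complex.exp (-(x:ℂ)^2/2) := by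
  induction n using Nat.twoStepInduction with
  | zero =>
    rw [aux0 x, hermiteH_zero]
    simp
  | one =>
    have h10 := ibp 0 x
    have hJ1 : ∫ y : ℝ, ((hermiteH 1 y:ℝ):ℂ) * Ef x y
        = 2 * ∫ y : ℝ, (y:ℂ) * (((hermiteH 0 y:ℝ):ℂ) * Ef x y) := by
      rw [← integral_const_mul]
      refine integral_congr_ae (Eventually.of_forall fun y => ?_)
      simp only [hermiteH_one, hermiteH_zero]; push_cast; ring
    rw [hJ1, h10, hermiteH_one]
    push_cast
    linear_combination 2*Complex.I*(x:ℂ)*(aux0 x)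
  | more n ih0 ih1 =>
    have hr := ibp (n+1) x
    simp only [Nat.add_sub_cancel] at hr
    have hsplit : ∫ y : ℝ, ((hermiteH (n+2) y:ℝ):ℂ) * Ef x y
        = 2 * (∫ y : ℝ, (y:ℂ) * (((hermiteH (n+1) y:ℝ):ℂ) * Ef x y))
          - (2*((n:ℂ)+1)) * ∫ y : ℝ, ((hermiteH n y:ℝ):ℂ) * Ef x y := by
      rw [← integral_const_mul, ← integral_const_mul,
        ← integral_sub ((int_yH (n+1) x).const_mul 2) ((int_H n x).const_mul _)]
      refine integral_congr_ae (Eventually.of_forall fun y => ?_)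
      simp only [hermiteH_rec]; push_cast; ring
    rw [hsplit, hr]
    push_cast [hermiteH_rec]
    linear_combination 2*Complex.I*(x:ℂ)*ih1 + (2*((n:ℂ)+1))*ih0
      + (2*((n:ℂ)+1)*((hermiteH n x:ℝ):ℂ)*Complex.exp (-(x:ℂ)^2/2)*Complex.I^n)*Complex.I_sq
theorem hermite_fourier_selfdual (n : ℕ) (x : ℝ) :
    (1 / Real.sqrt (2 * Real.pi) : ℂ) *
      ∫ y : ℝ, (hermiteH n y : ℂ) * Complex.exp (-(y : ℂ) ^ 2 / 2) *
        Complex.exp (Complex.I * (x : ℂ) * (y : ℂ)) =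
    Complex.I ^ n * (hermiteH n x : ℂ) * Complex.exp (-(x : ℂ) ^ 2 / 2) := by
  have := main_aux x n
  simpa [Ef, mul_assoc] using this
end

section
/- For every nonnegative integer n, every real α > -1, and every real x, (1/Γ(α+1)) ∫_0^∞ (L_n^{(α)}(y)/L_n^{(α)}(0)) e^{-y} y^α e^{-ixy} dy = iⁿ xⁿ / (1+ix)^{n+α+1}, where L_n^{(α)}(0) = (α+1)_n/n! and (1+ix)^{n+α+1} is the principal power. -/
open MeasureTheory Finset

/-- Rising factorial (Pochhammer symbol) `(a)_k = a(a+1)⋯(a+k-1)`. -/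
noncomputable def poch (a : ℝ) (k : ℕ) : ℝ := ∏ i ∈ Finset.range k, (a + i)

/-- Generalized Laguerre polynomial
`L_n^{(α)}(x) = Σ_{k=0}^n (-1)^k ((α+k+1)_{n-k} / ((n-k)! k!)) x^k`. -/
noncomputable def laguerreL (n : ℕ) (α : ℝ) (x : ℝ) : ℝ :=
  ∑ k ∈ Finset.range (n + 1),
    (-1 : ℝ) ^ k * poch (α + k + 1) (n - k) /
      (((n - k).factorial : ℝ) * (k.factorial : ℝ)) * x ^ k

open Complex Set Filter

lemma poch_pos {a : ℝ} (ha : 0 < a) (k : ℕ) : 0 < poch a k := by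
  apply Finset.prod_pos
  intro i _
  positivity

lemma gamma_poch {a : ℝ} (ha : 0 < a) (m : ℕ) :
    Real.Gamma (a + m) = Real.Gamma a * poch a m := by
  induction m with
  | zero => simp [poch]
  | succ m ih =>
    have h : a + (m + 1 : ℕ) = (a + m) + 1 := by push_cast; ring
    rw [h, Real.Gamma_add_one (by positivity), ih]
    have : poch a (m+1) = poch a m * (a + m) := Finset.prod_range_succ _ _
    rw [this]; ring

lemma aux_integrable {β : ℝ} (hβ : -1 < β) (c : ℂ) (hc : c.re = 1) :
    IntegrableOn (fun t : ℝ => ((t ^ β : ℝ) : ℂ) * Complex.exp (-(c * t))) (Ioi 0) := by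
  have hmeas : AEStronglyMeasurable
      (fun t : ℝ => ((t ^ β : ℝ) : ℂ) * Complex.exp (-(c * t)))
      (volume.restrict (Ioi 0)) := by
    apply Measurable.aestronglyMeasurable
    fun_prop
  refine Integrable.mono' ((Real.GammaIntegral_convergent (by linarith : (0:ℝ) < β + 1))) hmeas ?_
  filter_upwards [ae_restrict_mem measurableSet_Ioi] with t ht
  rw [norm_mul]
  have he : ‖Complex.exp (-(c * t))‖ = Real.exp (-t) := by
    rw [Complex.norm_exp]
    congr 1
    simp [hc]
  have h1 : ‖((t ^ β : ℝ) : ℂ)‖ = t ^ β := by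
    rw [Complex.norm_real, Real.norm_eq_abs, _root_.abs_of_nonneg (Real.rpow_nonneg (le_of_lt ht) β)]
  rw [h1, he, mul_comm]
  rw [show β + 1 - 1 = β by ring]

lemma aux_ibp {β : ℝ} (hβ : -1 < β) (c : ℂ) (hc : c.re = 1) :
    c * ∫ t in Ioi (0:ℝ), ((t ^ (β+1) : ℝ) : ℂ) * Complex.exp (-(c * t)) =
      (β + 1) * ∫ t in Ioi (0:ℝ), ((t ^ β : ℝ) : ℂ) * Complex.exp (-(c * t)) := by
  set g : ℝ → ℂ := fun t => ((t ^ (β+1) : ℝ) : ℂ) * Complex.exp (-(c * t)) with hg_def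
  set g' : ℝ → ℂ := fun t =>
    ((β+1) : ℂ) * (((t ^ β : ℝ)) : ℂ) * Complex.exp (-(c * t)) +
      ((t ^ (β+1) : ℝ) : ℂ) * Complex.exp (-(c * t)) * (-c) with hg'_def
  have hexp : ∀ t : ℝ, HasDerivAt (fun s : ℝ => Complex.exp (-(c * s)))
      (Complex.exp (-(c * t)) * (-c)) t := by
    intro t
    have hlin : HasDerivAt (fun z : ℂ => -(c * z)) (-c) (t : ℂ) := by
      have h := ((hasDerivAt_id (t : ℂ)).const_mul c).neg
      rw [mul_one] at h
      exact h
    exact ((Complex.hasDerivAt_exp _).comp _ hlin).comp_ofReal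
  have hderiv : ∀ t ∈ Ioi (0:ℝ), HasDerivAt g (g' t) t := by
    intro t ht
    have hpow : HasDerivAt (fun s : ℝ => ((s ^ (β+1) : ℝ) : ℂ))
        (((β+1) * t ^ β : ℝ) : ℂ) t := by
      have := Real.hasDerivAt_rpow_const (p := β + 1) (Or.inl (ne_of_gt ht))
      rw [show β + 1 - 1 = β by ring] at this
      exact this.ofReal_comp
    have := hpow.mul (hexp t)
    refine this.congr_deriv ?_
    simp only [hg'_def]
    push_cast
    ring
  have hcont : ContinuousWithinAt g (Ici (0:ℝ)) 0 := by
    apply ContinuousWithinAt.mul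
    · apply Complex.continuous_ofReal.continuousAt.comp_continuousWithinAt
      exact (Real.continuousAt_rpow_const 0 (β+1) (Or.inr (by linarith))).continuousWithinAt
    · exact (Complex.continuous_exp.comp (by continuity)).continuousAt.continuousWithinAt
  have hint1 : IntegrableOn (fun t : ℝ => ((t ^ β : ℝ) : ℂ) * Complex.exp (-(c * t))) (Ioi 0) :=
    aux_integrable hβ c hc
  have hint2 : IntegrableOn (fun t : ℝ => ((t ^ (β+1) : ℝ) : ℂ) * Complex.exp (-(c * t)))
      (Ioi 0) := aux_integrable (by linarith) c hc
  have hg'int : IntegrableOn g' (Ioi 0) := by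
    apply Integrable.add
    · simpa [mul_assoc] using hint1.const_mul ((β+1 : ℝ) : ℂ)
    · exact hint2.mul_const (-c)
  have htop : Tendsto g atTop (nhds 0) := by
    rw [tendsto_zero_iff_norm_tendsto_zero]
    have h0 : Tendsto (fun t : ℝ => t ^ (β+1) * Real.exp (-1 * t)) atTop (nhds 0) :=
      tendsto_rpow_mul_exp_neg_mul_atTop_nhds_zero (β+1) 1 one_pos
    apply Tendsto.congr' _ h0
    filter_upwards [Filter.eventually_gt_atTop (0:ℝ)] with t ht
    rw [hg_def]
    simp only [norm_mul, Complex.norm_real, Real.norm_eq_abs,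
      Complex.norm_exp]
    rw [_root_.abs_of_nonneg (Real.rpow_nonneg ht.le _)]
    congr 1
    simp [Complex.neg_re, Complex.mul_re, hc]
  have := integral_Ioi_of_hasDerivAt_of_tendsto hcont hderiv hg'int htop
  have hg0 : g 0 = 0 := by
    simp [hg_def, Real.zero_rpow (by linarith : β + 1 ≠ 0)]
  rw [hg0, sub_zero] at this
  rw [integral_add (by simpa [mul_assoc] using hint1.const_mul ((β+1 : ℝ) : ℂ))
    (hint2.mul_const (-c))] at this
  simp only [mul_assoc] at this
  rw [integral_const_mul] at this
  have hre : ∀ a : ℝ, ((a ^ (β+1) : ℝ) : ℂ) * (Complex.exp (-(c * a)) * -c) =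
      (((a ^ (β+1) : ℝ) : ℂ) * Complex.exp (-(c * a))) * -c := fun a => by ring
  simp only [hre] at this
  rw [integral_mul_const] at this
  rw [hg_def]
  linear_combination -this

lemma key {β : ℝ} (hβ : -1 < β) (x : ℝ) :
    ∫ t in Ioi (0:ℝ), ((t ^ β : ℝ) : ℂ) * Complex.exp (-((1 + Complex.I * x) * t)) =
      (Real.Gamma (β + 1) : ℂ) / (1 + Complex.I * x) ^ ((β : ℂ) + 1) := by
  have hβ1 : (0:ℝ) < β + 1 := by linarith
  set F : ℝ → ℂ := fun u =>
    ∫ t in Ioi (0:ℝ), ((t ^ β : ℝ) : ℂ) * Complex.exp (-((1 + Complex.I * u) * t)) with hF_def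
  have hcre : ∀ u : ℝ, (1 + Complex.I * u).re = 1 := by
    intro u; simp
  have hc0 : ∀ u : ℝ, (1 + Complex.I * u) ≠ 0 := by
    intro u h
    have := hcre u
    rw [h] at this
    simp at this
  -- derivative of F
  have hF' : ∀ u : ℝ, HasDerivAt F
      (-Complex.I * ∫ t in Ioi (0:ℝ),
        ((t ^ (β+1) : ℝ) : ℂ) * Complex.exp (-((1 + Complex.I * u) * t))) u := by
    intro u
    have hmeas : ∀ v : ℝ, AEStronglyMeasurable
        (fun t : ℝ => ((t ^ β : ℝ) : ℂ) * Complex.exp (-((1 + Complex.I * v) * t)))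
        (volume.restrict (Ioi 0)) := by
      intro v
      apply Measurable.aestronglyMeasurable
      fun_prop
    have hmeas' : AEStronglyMeasurable
        (fun t : ℝ => ((t ^ β : ℝ) : ℂ) * Complex.exp (-((1 + Complex.I * u) * t)) *
          (-(Complex.I * t))) (volume.restrict (Ioi 0)) := by
      apply Measurable.aestronglyMeasurable
      fun_prop
    have key := hasDerivAt_integral_of_dominated_loc_of_deriv_le (μ := volume.restrict (Ioi 0))
      (F := fun (v : ℝ) (t : ℝ) => ((t ^ β : ℝ) : ℂ) * Complex.exp (-((1 + Complex.I * v) * t)))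
      (F' := fun (v : ℝ) (t : ℝ) => ((t ^ β : ℝ) : ℂ) *
        Complex.exp (-((1 + Complex.I * v) * t)) * (-(Complex.I * t)))
      (x₀ := u) (bound := fun t => t ^ (β+1) * Real.exp (-t)) (s := Metric.ball u 1) (Metric.ball_mem_nhds u one_pos)
      (Filter.Eventually.of_forall hmeas) (aux_integrable hβ _ (hcre u)) hmeas' ?_ ?_ ?_
    · have := key.2
      apply this.congr_deriv
      rw [← integral_const_mul]
      apply setIntegral_congr_fun measurableSet_Ioi
      intro t ht
      dsimp only
      rw [Real.rpow_add_one (ne_of_gt ht)]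
      push_cast
      ring
    · -- bound
      filter_upwards [ae_restrict_mem measurableSet_Ioi] with t ht v _
      have hb : ‖((t ^ β : ℝ) : ℂ) * Complex.exp (-((1 + Complex.I * v) * t)) *
          (-(Complex.I * t))‖ = t ^ β * Real.exp (-t) * t := by
        rw [norm_mul, norm_mul]
        simp [Complex.norm_exp,
          _root_.abs_of_nonneg (Real.rpow_nonneg (le_of_lt ht) β), _root_.abs_of_nonneg (show (0:ℝ) ≤ t from le_of_lt ht)]
      rw [hb, Real.rpow_add_one (ne_of_gt ht)]
      exact le_of_eq (by ring)
    · -- bound integrable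
      have := Real.GammaIntegral_convergent (by linarith : (0:ℝ) < β + 2)
      apply Integrable.congr this
      filter_upwards [ae_restrict_mem measurableSet_Ioi] with t ht
      rw [show β + 2 - 1 = β + 1 by ring, mul_comm]
    · -- differentiability
      filter_upwards [ae_restrict_mem measurableSet_Ioi] with t ht v _
      have hlin : HasDerivAt (fun z : ℂ => -((1 + Complex.I * z) * t)) (-(Complex.I * t))
          (v : ℂ) := by
        have : HasDerivAt (fun z : ℂ => (1 + Complex.I * z) * t) (Complex.I * t) (v : ℂ) := by
          simpa using ((((hasDerivAt_id (v:ℂ)).const_mul Complex.I).const_add 1).mul_const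
            (t : ℂ))
        exact this.neg
      have hexp : HasDerivAt (fun w : ℝ => Complex.exp (-((1 + Complex.I * w) * t)))
          (Complex.exp (-((1 + Complex.I * v) * t)) * (-(Complex.I * t))) v :=
        ((Complex.hasDerivAt_exp _).comp _ hlin).comp_ofReal
      have := hexp.const_mul (((t:ℝ) ^ β : ℝ) : ℂ)
      simpa [mul_assoc] using this
  -- the function c^s * F is constant
  set f : ℝ → ℂ := fun u => (1 + Complex.I * u) ^ ((β:ℂ) + 1) * F u with hf_def
  have hf' : ∀ u : ℝ, HasDerivAt f 0 u := by
    intro u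
    have hcpow : HasDerivAt (fun w : ℝ => (1 + Complex.I * w) ^ ((β:ℂ) + 1))
        (((β:ℂ) + 1) * (1 + Complex.I * (u:ℝ)) ^ (β:ℂ) * Complex.I) u := by
      have hbase : HasDerivAt (fun z : ℂ => 1 + Complex.I * z) Complex.I (u : ℂ) := by
        simpa using ((hasDerivAt_id (u:ℂ)).const_mul Complex.I).const_add 1
      have hslit : (1 + Complex.I * (u:ℂ)) ∈ Complex.slitPlane := by
        rw [Complex.mem_slitPlane_iff]
        left
        rw [hcre u]
        norm_num
      have := (hbase.cpow_const (c := (β:ℂ)+1) hslit).comp_ofReal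
      rw [show (β:ℂ) + 1 - 1 = (β:ℂ) by ring] at this
      exact this
    have hX := aux_ibp hβ (1 + Complex.I * (u:ℝ)) (hcre u)
    have hprod := hcpow.mul (hF' u)
    apply hprod.congr_deriv
    have hcs : (1 + Complex.I * (u:ℝ)) ^ ((β:ℂ) + 1) =
        (1 + Complex.I * (u:ℝ)) ^ (β:ℂ) * (1 + Complex.I * (u:ℝ)) := by
      rw [Complex.cpow_add _ _ (hc0 u), Complex.cpow_one]
    rw [hcs]
    have hFu : F u = ∫ t in Ioi (0:ℝ), ((t ^ β : ℝ) : ℂ) *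
        Complex.exp (-((1 + Complex.I * u) * t)) := rfl
    rw [hFu]
    linear_combination (-((1 + Complex.I * (u:ℝ)) ^ (β:ℂ) * Complex.I)) * hX
  have hconst : f x = f 0 :=
    is_const_of_deriv_eq_zero (fun u => (hf' u).differentiableAt)
      (fun u => (hf' u).deriv) x 0
  have hf0 : f 0 = (Real.Gamma (β + 1) : ℂ) := by
    rw [hf_def]
    simp only
    rw [hF_def]
    simp only
    have h1 : ((1:ℂ) + Complex.I * (0:ℝ)) = 1 := by push_cast; ring
    rw [h1, Complex.one_cpow, one_mul]
    have h2 : ∀ t ∈ Ioi (0:ℝ), ((t ^ β : ℝ) : ℂ) * Complex.exp (-((1:ℂ) * t)) =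
        ((Real.exp (-t) * t ^ (β + 1 - 1) : ℝ) : ℂ) := by
      intro t ht
      rw [show β + 1 - 1 = β by ring]
      push_cast
      ring_nf
    rw [setIntegral_congr_fun measurableSet_Ioi h2]
    have hio := integral_ofReal (𝕜 := ℂ)
      (f := fun t : ℝ => Real.exp (-t) * t ^ (β + 1 - 1)) (μ := volume.restrict (Ioi 0))
    exact hio.trans (by rw [← Real.Gamma_eq_integral hβ1]; norm_cast)
  have hmain : (1 + Complex.I * x) ^ ((β:ℂ) + 1) * F x = (Real.Gamma (β + 1) : ℂ) := by
    rw [← hf0]; exact hconst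
  have hpowne : (1 + Complex.I * (x:ℂ)) ^ ((β:ℂ) + 1) ≠ 0 := by
    intro h
    rw [Complex.cpow_eq_zero_iff] at h
    exact hc0 x h.1
  field_simp at hmain ⊢
  rw [← hmain]

theorem laguerre_fourier (n : ℕ) (α : ℝ) (hα : α > -1) (x : ℝ) :
    (1 / (Real.Gamma (α + 1)) : ℂ) *
      ∫ y in Set.Ioi (0 : ℝ),
        ((laguerreL n α y / (poch (α + 1) n / (n.factorial : ℝ)) : ℝ) : ℂ) *
          Complex.exp (-(y : ℂ)) * ((y ^ α : ℝ) : ℂ) *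
          Complex.exp (-(Complex.I * (x : ℂ) * (y : ℂ))) =
    Complex.I ^ n * (x : ℂ) ^ n /
      (1 + Complex.I * (x : ℂ)) ^ ((n : ℂ) + (α : ℂ) + 1) := by
  have hα1 : (0:ℝ) < α + 1 := by linarith
  have hcre : (1 + Complex.I * (x:ℝ)).re = 1 := by simp
  have hc0 : (1 + Complex.I * (x:ℝ) : ℂ) ≠ 0 := by
    intro h
    have := congrArg Complex.re h
    rw [hcre] at this
    simp at this
  have hΓpos : 0 < Real.Gamma (α+1) := Real.Gamma_pos_of_pos hα1
  have hpochpos : 0 < poch (α+1) n := poch_pos hα1 n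
  have hnfac : (0:ℝ) < (n.factorial : ℝ) := by positivity
  have hrepr : ∀ y ∈ Ioi (0:ℝ),
      ((laguerreL n α y / (poch (α + 1) n / (n.factorial : ℝ)) : ℝ) : ℂ) *
        Complex.exp (-(y : ℂ)) * ((y ^ α : ℝ) : ℂ) *
        Complex.exp (-(Complex.I * (x : ℂ) * (y : ℂ))) =
      ∑ k ∈ range (n + 1),
        ((((-1 : ℝ) ^ k * poch (α + k + 1) (n - k) /
            (((n - k).factorial : ℝ) * (k.factorial : ℝ)) /
            (poch (α + 1) n / (n.factorial : ℝ))) : ℝ) : ℂ) *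
          (((y ^ (α + (k:ℝ)) : ℝ)) : ℂ) *
          Complex.exp (-((1 + Complex.I * (x:ℝ)) * y)) := by
    intro y hy
    have hy0 : (0:ℝ) < y := hy
    rw [laguerreL]
    push_cast
    simp only [Finset.sum_div, Finset.sum_mul]
    refine Finset.sum_congr rfl fun k hk => ?_
    have h1 : (y : ℝ) ^ (α + (k:ℝ)) = y ^ α * y ^ (k:ℕ) := by
      rw [Real.rpow_add hy0, Real.rpow_natCast]
    have h2 : Complex.exp (-((1 + Complex.I * (x:ℝ)) * y)) =
        Complex.exp (-(y:ℂ)) * Complex.exp (-(Complex.I * x * y)) := by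
      rw [← Complex.exp_add]
      congr 1
      ring
    rw [h1, h2]
    push_cast
    ring
  rw [setIntegral_congr_fun measurableSet_Ioi hrepr]
  rw [integral_finset_sum _ (fun k hk => by
    simp only [mul_assoc]
    exact (aux_integrable (by push_cast; linarith [Nat.cast_nonneg (α := ℝ) k] :
      (-1:ℝ) < α + (k:ℝ)) _ hcre).const_mul _)]
  have hval : ∀ k ∈ range (n+1),
      (∫ y in Ioi (0:ℝ),
        ((((-1 : ℝ) ^ k * poch (α + k + 1) (n - k) /
            (((n - k).factorial : ℝ) * (k.factorial : ℝ)) /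
            (poch (α + 1) n / (n.factorial : ℝ))) : ℝ) : ℂ) *
          (((y ^ (α + (k:ℝ)) : ℝ)) : ℂ) *
          Complex.exp (-((1 + Complex.I * (x:ℝ)) * y))) =
      (Real.Gamma (α+1) : ℂ) * ((-1:ℂ)^k * (n.choose k)) /
        ((1 + Complex.I * (x:ℝ)) ^ ((α:ℂ)+1) * (1 + Complex.I * (x:ℝ)) ^ (k:ℕ)) := by
    intro k hk
    have hk' : k ≤ n := Nat.lt_succ_iff.mp (Finset.mem_range.mp hk)
    have hβ : (-1:ℝ) < α + (k:ℝ) := by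
      have : (0:ℝ) ≤ (k:ℝ) := Nat.cast_nonneg k
      linarith
    simp only [mul_assoc]
    rw [integral_const_mul, key hβ x]
    have hsplit : (1 + Complex.I * (x:ℝ)) ^ (((α + (k:ℝ) : ℝ) : ℂ) + 1) =
        (1 + Complex.I * (x:ℝ)) ^ ((α:ℂ)+1) * (1 + Complex.I * (x:ℝ)) ^ (k:ℕ) := by
      rw [show (((α + (k:ℝ) : ℝ) : ℂ) + 1) = ((α:ℂ)+1) + ((k:ℕ):ℂ) by push_cast; ring,
        Complex.cpow_add _ _ hc0, Complex.cpow_natCast]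
    rw [hsplit]
    -- coefficient identity
    have hpk : (0:ℝ) < α + k + 1 := by
      have : (0:ℝ) ≤ (k:ℝ) := Nat.cast_nonneg k
      linarith
    have e2 := gamma_poch hpk (n - k)
    rw [show (α + (k:ℝ) + 1) + ((n-k:ℕ):ℝ) = (α+1) + n by
      rw [Nat.cast_sub hk']; push_cast; ring] at e2
    have e1 := gamma_poch hα1 n
    have hΓeq : Real.Gamma (α+1) * poch (α+1) n =
        Real.Gamma (α + k + 1) * poch (α + k + 1) (n - k) := by
      rw [← e1, ← e2]
    have hfac : ((n.choose k : ℝ)) * (k.factorial : ℝ) * ((n-k).factorial : ℝ) =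
        (n.factorial : ℝ) := by
      exact_mod_cast Nat.choose_mul_factorial_mul_factorial hk'
    have hcoef : ((-1 : ℝ) ^ k * poch (α + k + 1) (n - k) /
          (((n - k).factorial : ℝ) * (k.factorial : ℝ)) /
          (poch (α + 1) n / (n.factorial : ℝ))) * Real.Gamma (α + (k:ℝ) + 1) =
        Real.Gamma (α+1) * ((-1:ℝ)^k * (n.choose k)) := by
      have hfk : (0:ℝ) < (k.factorial : ℝ) := by positivity
      have hfnk : (0:ℝ) < ((n-k).factorial : ℝ) := by positivity
      field_simp
      linear_combination (-((n.choose k : ℝ) * (k.factorial : ℝ) * ((n-k).factorial : ℝ))) * hΓeq -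
        (Real.Gamma (α + k + 1) * poch (α + k + 1) (n - k)) * hfac
    have hcoefC : ((((-1 : ℝ) ^ k * poch (α + k + 1) (n - k) /
            (((n - k).factorial : ℝ) * (k.factorial : ℝ)) /
            (poch (α + 1) n / (n.factorial : ℝ))) : ℝ) : ℂ) *
          ((Real.Gamma (α + (k:ℝ) + 1) : ℝ) : ℂ) =
        (Real.Gamma (α+1) : ℂ) * ((-1:ℂ)^k * (n.choose k)) := by
      calc _ = ((((-1 : ℝ) ^ k * poch (α + k + 1) (n - k) /
            (((n - k).factorial : ℝ) * (k.factorial : ℝ)) /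
            (poch (α + 1) n / (n.factorial : ℝ))) * Real.Gamma (α + (k:ℝ) + 1) : ℝ) : ℂ) := by
              push_cast; ring
        _ = ((Real.Gamma (α+1) * ((-1:ℝ)^k * (n.choose k)) : ℝ) : ℂ) := by rw [hcoef]
        _ = _ := by push_cast; ring
    rw [← mul_div_assoc, hcoefC]
  rw [Finset.sum_congr rfl hval]
  -- now pure algebra with the binomial theorem
  have hcn : ∀ k ∈ range (n+1),
      (Real.Gamma (α+1) : ℂ) * ((-1:ℂ)^k * (n.choose k)) /
        ((1 + Complex.I * (x:ℝ)) ^ ((α:ℂ)+1) * (1 + Complex.I * (x:ℝ)) ^ (k:ℕ)) =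
      (Real.Gamma (α+1) : ℂ) /
        ((1 + Complex.I * (x:ℝ)) ^ ((α:ℂ)+1) * (1 + Complex.I * (x:ℝ)) ^ n) *
        ((-1:ℂ)^k * (1 + Complex.I * (x:ℝ)) ^ (n - k : ℕ) * (n.choose k)) := by
    intro k hk
    have hk' : k ≤ n := Nat.lt_succ_iff.mp (Finset.mem_range.mp hk)
    have hpow : (1 + Complex.I * (x:ℝ)) ^ (k:ℕ) * (1 + Complex.I * (x:ℝ)) ^ (n - k : ℕ) =
        (1 + Complex.I * (x:ℝ)) ^ n := by
      rw [← pow_add, Nat.add_sub_cancel' hk']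
    have hcp0 : (1 + Complex.I * (x:ℝ)) ^ ((α:ℂ)+1) ≠ 0 := by
      intro h
      rw [Complex.cpow_eq_zero_iff] at h
      exact hc0 h.1
    have hk0 : (1 + Complex.I * (x:ℝ)) ^ (k:ℕ) ≠ 0 := pow_ne_zero _ hc0
    have hn0 : (1 + Complex.I * (x:ℝ)) ^ (n:ℕ) ≠ 0 := pow_ne_zero _ hc0
    field_simp
    rw [← hpow]
    ring
  rw [Finset.sum_congr rfl hcn, ← Finset.mul_sum]
  have hbin : ∑ k ∈ range (n+1),
      ((-1:ℂ)^k * (1 + Complex.I * (x:ℝ)) ^ (n - k : ℕ) * (n.choose k)) =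
      (Complex.I * x) ^ n := by
    rw [← add_pow (-1 : ℂ) (1 + Complex.I * (x:ℝ)) n]
    congr 1
    ring
  rw [hbin]
  have hsplit2 : (1 + Complex.I * (x:ℂ)) ^ ((n : ℂ) + (α : ℂ) + 1) =
      (1 + Complex.I * (x:ℝ)) ^ ((α:ℂ)+1) * (1 + Complex.I * (x:ℝ)) ^ (n:ℕ) := by
    rw [show ((n : ℂ) + (α : ℂ) + 1) = ((α:ℂ)+1) + ((n:ℕ):ℂ) by push_cast; ring,
      Complex.cpow_add _ _ hc0, Complex.cpow_natCast]
  rw [hsplit2]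
  have hΓne : (Real.Gamma (α+1) : ℂ) ≠ 0 := by
    exact_mod_cast ne_of_gt hΓpos
  have hcp0 : (1 + Complex.I * (x:ℝ)) ^ ((α:ℂ)+1) ≠ 0 := by
    intro h
    rw [Complex.cpow_eq_zero_iff] at h
    exact hc0 h.1
  have hn0 : (1 + Complex.I * (x:ℝ)) ^ (n:ℕ) ≠ 0 := pow_ne_zero _ hc0
  field_simp
  ring
end

section
/- For every nonnegative integer n, every real α, and every real x, x · (d/dx)L_n^{(α)}(x) + α · L_n^{(α)}(x) = (n+α) · L_n^{(α-1)}(x). -/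
open MeasureTheory Finset

lemma poch_key (a : ℝ) (m : ℕ) : a * poch (a + 1) m = poch a m * (a + m) := by
  induction m with
  | zero => simp [poch]
  | succ m ih =>
    simp only [poch, Finset.prod_range_succ] at ih ⊢
    push_cast at ih ⊢
    linear_combination (a + 1 + m) * ih

theorem laguerre_diff_lower (n : ℕ) (α : ℝ) (x : ℝ) :
    x * deriv (fun t => laguerreL n α t) x + α * laguerreL n α x =
      ((n : ℝ) + α) * laguerreL n (α - 1) x := by
  have hd : deriv (fun t => laguerreL n α t) x
      = ∑ k ∈ Finset.range (n + 1),
          (-1 : ℝ) ^ k * poch (α + k + 1) (n - k) /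
            (((n - k).factorial : ℝ) * (k.factorial : ℝ)) * ((k : ℝ) * x ^ (k - 1)) := by
    have h : HasDerivAt (fun t => laguerreL n α t)
        (∑ k ∈ Finset.range (n + 1),
          (-1 : ℝ) ^ k * poch (α + k + 1) (n - k) /
            (((n - k).factorial : ℝ) * (k.factorial : ℝ)) * ((k : ℝ) * x ^ (k - 1))) x := by
      simp only [laguerreL]
      apply HasDerivAt.fun_sum
      intro k _
      exact (hasDerivAt_pow k x).const_mul _
    exact h.deriv
  rw [hd, laguerreL, laguerreL, Finset.mul_sum, Finset.mul_sum, Finset.mul_sum,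
    ← Finset.sum_add_distrib]
  apply Finset.sum_congr rfl
  intro k hk
  have hkn : k ≤ n := Nat.lt_succ_iff.mp (Finset.mem_range.mp hk)
  have hcast : ((n - k : ℕ) : ℝ) = (n : ℝ) - (k : ℝ) := by
    push_cast [hkn]; ring
  have hkey : ((k : ℝ) + α) * poch (α + k + 1) (n - k) =
      ((n : ℝ) + α) * poch (α + k) (n - k) := by
    have := poch_key (α + k) (n - k)
    rw [hcast] at this
    linear_combination this
  have hx : x * ((k : ℝ) * x ^ (k - 1)) = (k : ℝ) * x ^ k := by
    cases k with
    | zero => simp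
    | succ m => simp [pow_succ]; ring
  have hfac : (((n - k).factorial : ℝ) * (k.factorial : ℝ)) ≠ 0 := by
    positivity
  have hsub : α - 1 + k + 1 = α + k := by ring
  rw [hsub]
  linear_combination ((-1 : ℝ) ^ k / (((n - k).factorial : ℝ) * (k.factorial : ℝ))) *
    (x ^ k * hkey + poch (α + k + 1) (n-k) * hx)
end

section
/- Let n ≥ 1 be an integer, α a real number, and let f : ℝ → ℝ be defined by f(x) = L_n^{(α)}(x²). Then for every real x ≠ 0, f''(x) + ((2α+1)/x) f'(x) = -4(n+α) L_{n-1}^{(α)}(x²). -/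
open MeasureTheory Finset

lemma poch_succ (a : ℝ) (m : ℕ) : poch a (m+1) = poch a m * (a + m) := by
  simp [poch, Finset.prod_range_succ]

lemma poch_succ' (a : ℝ) (m : ℕ) : poch a (m+1) = a * poch (a+1) m := by
  rw [poch, Finset.prod_range_succ', poch, mul_comm]
  congr 1
  · ring
  · apply Finset.prod_congr rfl; intros; push_cast; ring

theorem laguerre_dunkl_squared (n : ℕ) (hn : 1 ≤ n) (α : ℝ)
    (f : ℝ → ℝ) (hf : ∀ x, f x = laguerreL n α (x ^ 2)) (x : ℝ) (hx : x ≠ 0) :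
    deriv (deriv f) x + (2 * α + 1) / x * deriv f x =
      -4 * ((n : ℝ) + α) * laguerreL (n - 1) α (x ^ 2) := by
  set c : ℕ → ℝ := fun k =>
    (-1 : ℝ) ^ k * poch (α + k + 1) (n - k) /
      (((n - k).factorial : ℝ) * (k.factorial : ℝ)) with hc
  have hf' : f = fun y => ∑ k ∈ Finset.range (n+1), c k * y ^ (2*k) := by
    funext y
    rw [hf, laguerreL]
    exact Finset.sum_congr rfl fun k _ => by rw [← pow_mul]
  have hd1 : ∀ y : ℝ, HasDerivAt f
      (∑ k ∈ Finset.range (n+1), c k * (((2*k : ℕ) : ℝ) * y ^ (2*k - 1))) y := by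
    intro y
    rw [hf']
    exact HasDerivAt.fun_sum fun k _ => (hasDerivAt_pow (2*k) y).const_mul (c k)
  have hD1 : deriv f = fun y =>
      ∑ k ∈ Finset.range (n+1), (c k * ((2*k : ℕ) : ℝ)) * y ^ (2*k - 1) := by
    funext y
    rw [(hd1 y).deriv]
    exact Finset.sum_congr rfl fun k _ => by ring
  have hd2 : HasDerivAt (deriv f)
      (∑ k ∈ Finset.range (n+1),
        (c k * ((2*k : ℕ) : ℝ)) * (((2*k - 1 : ℕ) : ℝ) * x ^ (2*k - 1 - 1))) x := by
    rw [hD1]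
    exact HasDerivAt.fun_sum fun k _ =>
      (hasDerivAt_pow (2*k - 1) x).const_mul (c k * ((2*k : ℕ) : ℝ))
  rw [hd2.deriv, hD1]
  -- combine the two sums
  rw [Finset.mul_sum, ← Finset.sum_add_distrib]
  have hstep : ∀ k ∈ Finset.range (n+1),
      (c k * ((2*k : ℕ) : ℝ)) * (((2*k - 1 : ℕ) : ℝ) * x ^ (2*k - 1 - 1))
        + (2*α + 1) / x * ((c k * ((2*k : ℕ) : ℝ)) * x ^ (2*k - 1))
      = c k * (4 * k * (k + α)) * x ^ (2*(k-1)) := by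
    intro k _
    cases k with
    | zero => simp
    | succ j =>
      have e1 : 2*(j+1) - 1 = 2*j + 1 := by omega
      have e2 : 2*(j+1) - 1 - 1 = 2*j := by omega
      have e3 : 2*((j+1) - 1) = 2*j := by omega
      rw [e2, e1, e3]
      have hxpow : x ^ (2*j + 1) = x ^ (2*j) * x := by ring
      rw [hxpow]
      push_cast
      field_simp
      ring
  rw [Finset.sum_congr rfl hstep]
  -- shift index
  rw [Finset.sum_range_succ']
  simp only [Nat.cast_zero, mul_zero, zero_mul, mul_zero, zero_mul, add_zero]
  -- RHS
  have hn1 : n - 1 + 1 = n := by omega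
  rw [laguerreL, hn1, Finset.mul_sum]
  apply Finset.sum_congr rfl
  intro j hj
  have hjn : j < n := Finset.mem_range.mp hj
  have hm : n - (j+1) = n - 1 - j := by omega
  set m := n - 1 - j with hmdef
  have hjm : (j : ℝ) + 1 + m = n := by
    have : j + 1 + m = n := by omega
    exact_mod_cast this
  have hp : (α + (j:ℝ) + 1) * poch (α + j + 1 + 1) m = poch (α + j + 1) m * (α + n) := by
    rw [← poch_succ', poch_succ]
    congr 1
    linarith
  have hcj : c (j+1) = (-1 : ℝ) ^ (j+1) * poch (α + j + 1 + 1) m /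
      ((m.factorial : ℝ) * ((j+1).factorial : ℝ)) := by
    rw [hc]
    simp only [hm]
    congr 2
    push_cast
    ring
  have e3 : 2*((j+1) - 1) = 2*j := by omega
  rw [e3, hcj]
  have hfac : ((j+1).factorial : ℝ) = (j+1) * (j.factorial : ℝ) := by
    rw [Nat.factorial_succ]; push_cast; ring
  have hmf : (m.factorial : ℝ) ≠ 0 := Nat.cast_ne_zero.mpr m.factorial_ne_zero
  have hjf : (j.factorial : ℝ) ≠ 0 := Nat.cast_ne_zero.mpr j.factorial_ne_zero
  have hj1 : ((j:ℝ) + 1) ≠ 0 := by positivity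
  rw [hfac, pow_succ, ← pow_mul]
  push_cast
  field_simp
  linear_combination (-1:ℝ) * hp
end

section
/- For every nonnegative integer n, every real λ > 0, and every real x, (2/(n! Γ(λ))) ∫_0^∞ H_n(tx) t^{n+2λ-1} e^{-t²} dt = C_n^{(λ)}(x), where Γ is the Gamma function. -/
open MeasureTheory Finset

/-- Gegenbauer (ultraspherical) polynomial
`C_n^{(λ)}(x) = Σ_{ℓ=0}^{⌊n/2⌋} (-1)^ℓ ((λ)_{n-ℓ}/(ℓ! (n-2ℓ)!)) (2x)^{n-2ℓ}`. -/
noncomputable def gegenbauerC (n : ℕ) (l : ℝ) (x : ℝ) : ℝ :=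
  ∑ m ∈ Finset.range (n / 2 + 1),
    (-1 : ℝ) ^ m * poch l (n - m) /
      ((m.factorial : ℝ) * ((n - 2 * m).factorial : ℝ)) * (2 * x) ^ (n - 2 * m)

lemma gamma_add_nat (l : ℝ) (hl : 0 < l) (k : ℕ) :
    Real.Gamma (l + k) = poch l k * Real.Gamma l := by
  induction k with
  | zero => simp [poch]
  | succ k ih =>
    have h : l + k ≠ 0 := by positivity
    have : l + (k + 1 : ℕ) = (l + k) + 1 := by push_cast; ring
    rw [this, Real.Gamma_add_one h, ih]
    simp only [poch, Finset.prod_range_succ]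
    ring

theorem hermite_laplace_gegenbauer (n : ℕ) (l : ℝ) (hl : 0 < l) (x : ℝ) :
    2 / ((n.factorial : ℝ) * Real.Gamma l) *
      ∫ t in Set.Ioi (0 : ℝ),
        hermiteH n (t * x) * t ^ ((n : ℝ) + 2 * l - 1) * Real.exp (-t ^ 2) =
    gegenbauerC n l x := by
  have hGpos : 0 < Real.Gamma l := Real.Gamma_pos_of_pos hl
  set c : ℕ → ℝ := fun m =>
    (n.factorial : ℝ) * ((-1 : ℝ) ^ m * (2 * x) ^ (n - 2 * m) /
      ((m.factorial : ℝ) * ((n - 2 * m).factorial : ℝ))) with hc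
  set q : ℕ → ℝ := fun m => ((n - 2 * m : ℕ) : ℝ) + ((n : ℝ) + 2 * l - 1) with hq
  have hqpos : ∀ m, -1 < q m := by
    intro m
    have : (0:ℝ) ≤ ((n - 2*m : ℕ) : ℝ) := Nat.cast_nonneg _
    have : (0:ℝ) ≤ (n:ℝ) := Nat.cast_nonneg _
    simp only [hq]
    nlinarith [Nat.cast_nonneg (α := ℝ) (n - 2*m), Nat.cast_nonneg (α := ℝ) n]
  have key : (∫ t in Set.Ioi (0 : ℝ),
        hermiteH n (t * x) * t ^ ((n : ℝ) + 2 * l - 1) * Real.exp (-t ^ 2)) =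
      ∑ m ∈ Finset.range (n / 2 + 1),
        c m * ((1/2) * Real.Gamma ((q m + 1) / 2)) := by
    have hcongr : (∫ t in Set.Ioi (0 : ℝ),
          hermiteH n (t * x) * t ^ ((n : ℝ) + 2 * l - 1) * Real.exp (-t ^ 2)) =
        ∫ t in Set.Ioi (0 : ℝ), ∑ m ∈ Finset.range (n / 2 + 1),
          c m * (t ^ (q m) * Real.exp (- t ^ (2:ℝ))) := by
      refine setIntegral_congr_fun measurableSet_Ioi (fun t ht => ?_)
      have ht' : (0:ℝ) < t := ht
      simp only [hermiteH, Finset.mul_sum, Finset.sum_mul]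
      refine Finset.sum_congr rfl (fun m _ => ?_)
      have h1 : (2 * (t * x)) ^ (n - 2 * m) = (2 * x) ^ (n - 2*m) * t ^ (n - 2*m) := by
        rw [← mul_pow]; ring_nf
      have h2 : (t : ℝ) ^ (n - 2*m) * t ^ ((n : ℝ) + 2 * l - 1) = t ^ (q m) := by
        rw [← Real.rpow_natCast t (n - 2*m), ← Real.rpow_add ht']
      have h3 : t ^ ((2:ℝ)) = t ^ (2:ℕ) := Real.rpow_natCast t 2
      rw [h3]
      simp only [hc]
      rw [← h2]
      field_simp
      rw [← h1]
      ring
    have hint : ∀ m ∈ Finset.range (n / 2 + 1), IntegrableOn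
        (fun t : ℝ => c m * (t ^ (q m) * Real.exp (- t ^ (2:ℝ)))) (Set.Ioi 0) :=
      fun m _ => (integrableOn_rpow_mul_exp_neg_rpow (hqpos m) two_pos).const_mul _
    rw [hcongr, MeasureTheory.integral_finset_sum _ hint]
    refine Finset.sum_congr rfl (fun m _ => ?_)
    rw [MeasureTheory.integral_const_mul,
      integral_rpow_mul_exp_neg_rpow two_pos (hqpos m)]
  rw [key, Finset.mul_sum, gegenbauerC]
  refine Finset.sum_congr rfl (fun m hm => ?_)
  have hm' : 2 * m ≤ n := by
    have := Finset.mem_range.mp hm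
    omega
  have hcast : ((n - 2*m : ℕ) : ℝ) = (n:ℝ) - 2*m := by
    push_cast [Nat.cast_sub hm']; ring
  have hgamma : (q m + 1) / 2 = l + ((n - m : ℕ) : ℝ) := by
    rw [hq]
    simp only
    rw [hcast, Nat.cast_sub (by omega : m ≤ n)]
    ring
  rw [hgamma, gamma_add_nat l hl (n - m)]
  have hGne : Real.Gamma l ≠ 0 := ne_of_gt hGpos
  have hfn : (n.factorial : ℝ) ≠ 0 := Nat.cast_ne_zero.mpr n.factorial_ne_zero
  have hfm : (m.factorial : ℝ) ≠ 0 := Nat.cast_ne_zero.mpr m.factorial_ne_zero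
  have hfk : ((n - 2*m).factorial : ℝ) ≠ 0 := Nat.cast_ne_zero.mpr (n-2*m).factorial_ne_zero
  simp only [hc]
  field_simp
end

section
/- Let N be a positive integer, m, n integers with 0 ≤ m ≤ N and 0 ≤ n ≤ N, and p, q, z real numbers with p ≠ 0, q ≠ 0, z ≠ 0, p - z + pz ≠ 0, q - z + qz ≠ 0, and 1 + z ≠ 0. Then Σ_{x=0}^N binom(N,x) K_m(x; p, N) K_n(x; q, N) z^x = ((p-z+pz)/p)^m · ((q-z+qz)/q)^n · (1+z)^{N-m-n} · K_m(n; -((p-z+pz)(q-z+qz))/z, N), where (1+z)^{N-m-n} denotes (1+z)^{N-m-n} as a real power of the nonzero real 1+z (an integer exponent, possibly negative). -/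
open MeasureTheory Finset

/-- Krawtchouk polynomial
`K_n(x; p, N) = Σ_{k=0}^n ((-n)_k (-x)_k / ((-N)_k k!)) p^{-k}`. -/
noncomputable def krawtchoukK (n : ℕ) (x : ℝ) (p : ℝ) (N : ℕ) : ℝ :=
  ∑ k ∈ Finset.range (n + 1),
    poch (-(n : ℝ)) k * poch (-x) k / (poch (-(N : ℝ)) k * (k.factorial : ℝ)) *
      p ^ (-(k : ℤ))

lemma trin (n k j : ℕ) (hjk : j ≤ k) :
    n.choose k * k.choose j = n.choose j * (n - j).choose (k - j) := by
  rcases le_or_gt k n with hkn | hkn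
  · have h1 := Nat.choose_mul_factorial_mul_factorial hjk
    have h2 := Nat.choose_mul_factorial_mul_factorial hkn
    have h3 := Nat.choose_mul_factorial_mul_factorial (hjk.trans hkn)
    have h4 := Nat.choose_mul_factorial_mul_factorial (Nat.sub_le_sub_right hkn j)
    have he : n - j - (k - j) = n - k := by omega
    rw [he] at h4
    have hpos : 0 < j.factorial * (k - j).factorial * (n - k).factorial := by positivity
    apply Nat.eq_of_mul_eq_mul_right hpos
    calc n.choose k * k.choose j * (j.factorial * (k - j).factorial * (n - k).factorial)
        = n.choose k * (k.choose j * j.factorial * (k - j).factorial) * (n - k).factorial := by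
          ring
      _ = n.choose k * k.factorial * (n - k).factorial := by rw [h1]
      _ = n.factorial := h2
      _ = n.choose j * j.factorial * (n - j).factorial := h3.symm
      _ = n.choose j * j.factorial *
          ((n - j).choose (k - j) * (k - j).factorial * (n - k).factorial) := by rw [h4]
      _ = n.choose j * (n - j).choose (k - j) *
          (j.factorial * (k - j).factorial * (n - k).factorial) := by ring
  · have h0 : n.choose k = 0 := Nat.choose_eq_zero_of_lt hkn
    rcases le_or_gt j n with hjn | hjn
    · have : (n - j).choose (k - j) = 0 := Nat.choose_eq_zero_of_lt (by omega)
      simp [h0, this]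
    · simp [h0, Nat.choose_eq_zero_of_lt hjn]

-- Vandermonde over range

lemma vdm (a b k : ℕ) :
    ∑ i ∈ range (k + 1), a.choose i * b.choose (k - i) = (a + b).choose k := by
  rw [Nat.add_choose_eq, Finset.Nat.sum_antidiagonal_eq_sum_range_succ_mk]

lemma chooseP (x j k : ℕ) :
    x.choose j * x.choose k =
      ∑ i ∈ range (k + 1), x.choose (j + i) * (j + i).choose j * j.choose (k - i) := by
  rcases le_or_gt j x with hjx | hjx
  · have hterm : ∀ i, x.choose (j + i) * (j + i).choose j * j.choose (k - i)
        = x.choose j * ((x - j).choose i * j.choose (k - i)) := by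
      intro i
      have h := trin x (j + i) j (Nat.le_add_right j i)
      simp only [Nat.add_sub_cancel_left] at h
      rw [h]; ring
    simp only [hterm, ← Finset.mul_sum, vdm]
    have : x - j + j = x := by omega
    rw [this]
  · have h0 : x.choose j = 0 := Nat.choose_eq_zero_of_lt hjx
    have hterm : ∀ i, x.choose (j + i) = 0 := fun i =>
      Nat.choose_eq_zero_of_lt (by omega)
    simp [h0, hterm]

-- key combinatorial identity

lemma keyC (N j k t : ℕ) (hj : j ≤ N) (hk : k ≤ N) :
    (∑ i ∈ range (k + 1),
        (j + i).choose j * j.choose (k - i) * N.choose (j + i) * (k - i).choose t) * N.choose t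
      = N.choose j * N.choose k * j.choose t * k.choose t := by
  rcases le_or_gt t k with htk | htk
  · -- restrict sum to i ≤ k - t
    have hsub : range (k - t + 1) ⊆ range (k + 1) := by
      apply Finset.range_subset_range.2; omega
    have hzero : ∀ i ∈ range (k + 1), i ∉ range (k - t + 1) →
        (j + i).choose j * j.choose (k - i) * N.choose (j + i) * (k - i).choose t = 0 := by
      intro i hi hni
      simp only [Finset.mem_range] at hi hni
      have : (k - i).choose t = 0 := Nat.choose_eq_zero_of_lt (by omega)
      simp [this]
    rw [← Finset.sum_subset hsub hzero]
    have hterm : ∀ i ∈ range (k - t + 1),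
        (j + i).choose j * j.choose (k - i) * N.choose (j + i) * (k - i).choose t
          = N.choose j * j.choose t * ((N - j).choose i * (j - t).choose (k - t - i)) := by
      intro i hi
      simp only [Finset.mem_range] at hi
      have h1 := trin N (j + i) j (Nat.le_add_right j i)
      simp only [Nat.add_sub_cancel_left] at h1
      have h2 := trin j (k - i) t (by omega)
      have he : k - i - t = k - t - i := by omega
      rw [he] at h2
      calc (j + i).choose j * j.choose (k - i) * N.choose (j + i) * (k - i).choose t
          = (N.choose (j + i) * (j + i).choose j) * (j.choose (k - i) * (k - i).choose t) := by
            ring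
        _ = (N.choose j * (N - j).choose i) * (j.choose t * (j - t).choose (k - t - i)) := by
            rw [h1, h2]
        _ = N.choose j * j.choose t * ((N - j).choose i * (j - t).choose (k - t - i)) := by ring
    rw [Finset.sum_congr rfl hterm, ← Finset.mul_sum, vdm]
    rcases le_or_gt t j with htj | htj
    · have he : N - j + (j - t) = N - t := by omega
      rw [he]
      have h3 := trin N k t htk
      calc N.choose j * j.choose t * (N - t).choose (k - t) * N.choose t
          = N.choose j * j.choose t * (N.choose t * (N - t).choose (k - t)) := by ring
        _ = N.choose j * j.choose t * (N.choose k * k.choose t) := by rw [← h3]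
        _ = N.choose j * N.choose k * j.choose t * k.choose t := by ring
    · simp [Nat.choose_eq_zero_of_lt htj]
  · have hz : ∀ i ∈ range (k + 1),
        (j + i).choose j * j.choose (k - i) * N.choose (j + i) * (k - i).choose t = 0 := by
      intro i hi
      have : (k - i).choose t = 0 := Nat.choose_eq_zero_of_lt (by omega)
      simp [this]
    rw [Finset.sum_eq_zero hz]
    simp [Nat.choose_eq_zero_of_lt htk]

lemma poch_neg (x k : ℕ) :
    poch (-(x : ℝ)) k = (-1) ^ k * (k.factorial : ℝ) * (x.choose k : ℝ) := by
  induction k with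
  | zero => simp [poch]
  | succ k ih =>
    rw [poch, Finset.prod_range_succ, ← poch, ih]
    rcases le_or_gt (k + 1) x with h | h
    · have hc := Nat.choose_succ_right_eq x k
      have hcast : ((x.choose (k + 1) : ℝ)) * (k + 1) = (x.choose k : ℝ) * ((x : ℝ) - k) := by
        have := congrArg (fun t : ℕ => (t : ℝ)) hc
        push_cast [Nat.cast_sub (by omega : k ≤ x)] at this
        exact_mod_cast this
      push_cast [Nat.factorial_succ]
      linear_combination ((-1 : ℝ) ^ k * (k.factorial : ℝ)) * hcast
    · rcases Nat.lt_or_ge k x with hkx | hkx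
      · have hx : x = k := by omega
        subst hx
        simp [Nat.choose_succ_self]
      · have h1 : x.choose (k + 1) = 0 := Nat.choose_eq_zero_of_lt (by omega)
        rcases Nat.eq_or_lt_of_le hkx with he | hl
        · subst he
          simp [Nat.choose_succ_self]
        · have h2 : x.choose k = 0 := Nat.choose_eq_zero_of_lt hl
          simp [h1, h2]

lemma kraw_eq (M N x : ℕ) (hM : M ≤ N) (p : ℝ) (hp : p ≠ 0) :
    krawtchoukK M (x : ℝ) p N =
      ∑ j ∈ range (M + 1),
        (-1 : ℝ) ^ j * (M.choose j : ℝ) * (x.choose j : ℝ) / (N.choose j : ℝ) * (p⁻¹) ^ j := by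
  unfold krawtchoukK
  apply Finset.sum_congr rfl
  intro j hj
  simp only [Finset.mem_range] at hj
  have hjN : j ≤ N := by omega
  rw [poch_neg, poch_neg, poch_neg]
  have hNj : ((N.choose j : ℝ)) ≠ 0 := by
    exact_mod_cast Nat.choose_pos hjN |>.ne'
  have hf : ((j.factorial : ℝ)) ≠ 0 := by exact_mod_cast (Nat.factorial_pos j).ne'
  have hz : p ^ (-(j : ℤ)) = (p⁻¹) ^ j := by
    rw [zpow_neg, zpow_natCast, inv_pow]
  rw [hz]
  have h3 : ((-1 : ℝ)) ^ (j * 3) = (-1) ^ j := by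
    rw [show j * 3 = j + j * 2 by ring, pow_add, mul_comm j 2, pow_mul, neg_one_sq, one_pow,
      mul_one]
  have hinv : ((j.factorial : ℝ)) ^ 2 * (((j.factorial : ℝ))⁻¹) ^ 2 = 1 := by
    field_simp
  field_simp

lemma sumQ (N s : ℕ) (hs : s ≤ N) (z : ℝ) :
    ∑ x ∈ range (N + 1), (N.choose x : ℝ) * (x.choose s : ℝ) * z ^ x
      = (N.choose s : ℝ) * z ^ s * (1 + z) ^ (N - s) := by
  rw [Finset.range_eq_Ico, ← Finset.sum_Ico_consecutive _ (Nat.zero_le s) (by omega : s ≤ N + 1)]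
  have h0 : ∑ x ∈ Finset.Ico 0 s, (N.choose x : ℝ) * (x.choose s : ℝ) * z ^ x = 0 := by
    apply Finset.sum_eq_zero
    intro x hx
    simp only [Finset.mem_Ico] at hx
    simp [Nat.choose_eq_zero_of_lt hx.2]
  rw [h0, zero_add, Finset.sum_Ico_eq_sum_range]
  have hlen : N + 1 - s = (N - s) + 1 := by omega
  rw [hlen]
  have hterm : ∀ y ∈ range ((N - s) + 1),
      (N.choose (s + y) : ℝ) * ((s + y).choose s : ℝ) * z ^ (s + y)
        = (N.choose s : ℝ) * z ^ s * (((N - s).choose y : ℝ) * z ^ y) := by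
    intro y hy
    have h := trin N (s + y) s (Nat.le_add_right s y)
    simp only [Nat.add_sub_cancel_left] at h
    have hcast : ((N.choose (s + y) : ℝ)) * ((s + y).choose s : ℝ)
        = (N.choose s : ℝ) * ((N - s).choose y : ℝ) := by exact_mod_cast congrArg Nat.cast h
    rw [pow_add]
    calc (N.choose (s + y) : ℝ) * ((s + y).choose s : ℝ) * (z ^ s * z ^ y)
        = ((N.choose (s + y) : ℝ) * ((s + y).choose s : ℝ)) * (z ^ s * z ^ y) := by ring
      _ = ((N.choose s : ℝ) * ((N - s).choose y : ℝ)) * (z ^ s * z ^ y) := by rw [hcast]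
      _ = (N.choose s : ℝ) * z ^ s * (((N - s).choose y : ℝ) * z ^ y) := by ring
  rw [Finset.sum_congr rfl hterm, ← Finset.mul_sum]
  congr 1
  have := add_pow z 1 (N - s)
  simp only [one_pow, mul_one] at this
  rw [add_comm 1 z, this]
  apply Finset.sum_congr rfl
  intro y hy
  ring

lemma lemA (N j k : ℕ) (hj : j ≤ N) (hk : k ≤ N) (z : ℝ) :
    ∑ x ∈ range (N + 1), (N.choose x : ℝ) * (x.choose j : ℝ) * (x.choose k : ℝ) * z ^ x
      = ∑ i ∈ range (k + 1),
          ((j + i).choose j : ℝ) * (j.choose (k - i) : ℝ) * (N.choose (j + i) : ℝ) *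
            z ^ (j + i) * (1 + z) ^ (N - (j + i)) := by
  have hexp : ∀ x ∈ range (N + 1),
      (N.choose x : ℝ) * (x.choose j : ℝ) * (x.choose k : ℝ) * z ^ x
        = ∑ i ∈ range (k + 1),
            ((j + i).choose j : ℝ) * (j.choose (k - i) : ℝ) *
              ((N.choose x : ℝ) * (x.choose (j + i) : ℝ) * z ^ x) := by
    intro x hx
    have h := chooseP x j k
    have hcast : ((x.choose j : ℝ)) * (x.choose k : ℝ)
        = ∑ i ∈ range (k + 1),
            (x.choose (j + i) : ℝ) * ((j + i).choose j : ℝ) * (j.choose (k - i) : ℝ) := by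
      exact_mod_cast congrArg Nat.cast h
    calc (N.choose x : ℝ) * (x.choose j : ℝ) * (x.choose k : ℝ) * z ^ x
        = ((x.choose j : ℝ) * (x.choose k : ℝ)) * ((N.choose x : ℝ) * z ^ x) := by ring
      _ = (∑ i ∈ range (k + 1),
            (x.choose (j + i) : ℝ) * ((j + i).choose j : ℝ) * (j.choose (k - i) : ℝ)) *
            ((N.choose x : ℝ) * z ^ x) := by rw [hcast]
      _ = _ := by rw [Finset.sum_mul]; apply Finset.sum_congr rfl; intro i hi; ring
  rw [Finset.sum_congr rfl hexp, Finset.sum_comm]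
  apply Finset.sum_congr rfl
  intro i hi
  rw [← Finset.mul_sum]
  rcases le_or_gt (j + i) N with hji | hji
  · rw [sumQ N (j + i) hji z]
    ring
  · have h1 : (N.choose (j + i) : ℝ) = 0 := by
      exact_mod_cast congrArg Nat.cast (Nat.choose_eq_zero_of_lt hji)
    have h2 : ∑ x ∈ range (N + 1), (N.choose x : ℝ) * (x.choose (j + i) : ℝ) * z ^ x = 0 := by
      apply Finset.sum_eq_zero
      intro x hx
      simp only [Finset.mem_range] at hx
      have : (x.choose (j + i) : ℝ) = 0 := by
        exact_mod_cast congrArg Nat.cast (Nat.choose_eq_zero_of_lt (by omega))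
      simp [this]
    rw [h2, h1]
    ring

lemma lemE (N j k : ℕ) (hj : j ≤ N) (hk : k ≤ N) (z : ℝ) (h1z : 1 + z ≠ 0) :
    ∑ x ∈ range (N + 1), (N.choose x : ℝ) * (x.choose j : ℝ) * (x.choose k : ℝ) * z ^ x
      = ∑ t ∈ range (N + 1),
          (N.choose j : ℝ) * (N.choose k : ℝ) * (j.choose t : ℝ) * (k.choose t : ℝ) /
            (N.choose t : ℝ) * z ^ (j + k - t) * (1 + z) ^ ((N : ℤ) - j - k) := by
  rw [lemA N j k hj hk z]
  have hstep : ∀ i ∈ range (k + 1),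
      ((j + i).choose j : ℝ) * (j.choose (k - i) : ℝ) * (N.choose (j + i) : ℝ) *
          z ^ (j + i) * (1 + z) ^ (N - (j + i))
        = ∑ t ∈ range (N + 1),
            ((j + i).choose j : ℝ) * (j.choose (k - i) : ℝ) * (N.choose (j + i) : ℝ) *
              ((k - i).choose t : ℝ) * (z ^ (j + k - t) * (1 + z) ^ ((N : ℤ) - j - k)) := by
    intro i hi
    simp only [Finset.mem_range] at hi
    have hik : i ≤ k := by omega
    rcases le_or_gt (j + i) N with hji | hji
    · -- main case
      have hzpow : ((1 : ℝ) + z) ^ (N - (j + i))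
          = (1 + z) ^ (k - i) * (1 + z) ^ ((N : ℤ) - j - k) := by
        have : ((1 : ℝ) + z) ^ (N - (j + i)) = (1 + z) ^ ((N - (j + i) : ℕ) : ℤ) := by
          rw [zpow_natCast]
        rw [this]
        have he : ((N - (j + i) : ℕ) : ℤ) = ((k - i : ℕ) : ℤ) + ((N : ℤ) - j - k) := by
          omega
        rw [he, zpow_add₀ h1z, zpow_natCast]
      rw [hzpow]
      have hbin : ((1 : ℝ) + z) ^ (k - i)
          = ∑ r ∈ range ((k - i) + 1), ((k - i).choose r : ℝ) * z ^ r := by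
        have := add_pow z 1 (k - i)
        simp only [one_pow, mul_one] at this
        rw [add_comm 1 z, this]
        apply Finset.sum_congr rfl
        intro r hr
        ring
      rw [hbin, Finset.sum_mul, Finset.mul_sum]
      -- reflect the r-sum
      rw [← Finset.sum_range_reflect]
      have hext : range ((k - i) + 1) ⊆ range (N + 1) := by
        apply Finset.range_subset_range.2; omega
      rw [← Finset.sum_subset hext]
      · apply Finset.sum_congr rfl
        intro t ht
        simp only [Finset.mem_range] at ht
        have htki : t ≤ k - i := by omega
        have h1 : k - i + 1 - 1 - t = k - i - t := by omega
        rw [h1]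
        have h2 : ((k - i).choose (k - i - t) : ℝ) = ((k - i).choose t : ℝ) := by
          exact_mod_cast congrArg Nat.cast (Nat.choose_symm htki)
        have h3 : z ^ (j + i) * z ^ (k - i - t) = z ^ (j + k - t) := by
          rw [← pow_add]
          congr 1
          omega
        calc ((j + i).choose j : ℝ) * (j.choose (k - i) : ℝ) * (N.choose (j + i) : ℝ) *
              z ^ (j + i) *
              (((k - i).choose (k - i - t) : ℝ) * z ^ (k - i - t) * (1 + z) ^ ((N : ℤ) - j - k))
            = ((j + i).choose j : ℝ) * (j.choose (k - i) : ℝ) * (N.choose (j + i) : ℝ) *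
              ((k - i).choose (k - i - t) : ℝ) *
              (z ^ (j + i) * z ^ (k - i - t) * (1 + z) ^ ((N : ℤ) - j - k)) := by ring
          _ = _ := by rw [h2, h3]
      · intro t ht hnt
        simp only [Finset.mem_range] at ht hnt
        have : ((k - i).choose t : ℝ) = 0 := by
          exact_mod_cast congrArg Nat.cast (Nat.choose_eq_zero_of_lt (by omega))
        simp [this]
    · have h1 : (N.choose (j + i) : ℝ) = 0 := by
        exact_mod_cast congrArg Nat.cast (Nat.choose_eq_zero_of_lt hji)
      simp [h1]
  rw [Finset.sum_congr rfl hstep, Finset.sum_comm]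
  apply Finset.sum_congr rfl
  intro t ht
  simp only [Finset.mem_range] at ht
  have hNt : ((N.choose t : ℝ)) ≠ 0 := by
    exact_mod_cast (Nat.choose_pos (by omega : t ≤ N)).ne'
  have hkey := keyC N j k t hj hk
  have hkeyR : (∑ i ∈ range (k + 1),
      ((j + i).choose j : ℝ) * (j.choose (k - i) : ℝ) * (N.choose (j + i) : ℝ) *
        ((k - i).choose t : ℝ))
      = (N.choose j : ℝ) * (N.choose k : ℝ) * (j.choose t : ℝ) * (k.choose t : ℝ) /
          (N.choose t : ℝ) := by
    rw [eq_div_iff hNt]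
    exact_mod_cast congrArg Nat.cast hkey
  rw [← Finset.sum_mul, hkeyR]
  ring

lemma lemD (m t : ℕ) (ht : t ≤ m) (p z : ℝ) (hp : p ≠ 0) :
    ∑ j ∈ range (m + 1),
        (m.choose j : ℝ) * (j.choose t : ℝ) * (p⁻¹) ^ j * (-z) ^ (j - t) * (1 + z) ^ (m - j)
      = (m.choose t : ℝ) * (p * (1 + z) - z) ^ (m - t) * (p⁻¹) ^ m := by
  rw [Finset.range_eq_Ico, ← Finset.sum_Ico_consecutive _ (Nat.zero_le t) (by omega : t ≤ m + 1)]
  have h0 : ∑ j ∈ Finset.Ico 0 t,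
      (m.choose j : ℝ) * (j.choose t : ℝ) * (p⁻¹) ^ j * (-z) ^ (j - t) * (1 + z) ^ (m - j) = 0 := by
    apply Finset.sum_eq_zero
    intro j hj
    simp only [Finset.mem_Ico] at hj
    have : (j.choose t : ℝ) = 0 := by
      exact_mod_cast congrArg Nat.cast (Nat.choose_eq_zero_of_lt hj.2)
    simp [this]
  rw [h0, zero_add, Finset.sum_Ico_eq_sum_range]
  have hlen : m + 1 - t = (m - t) + 1 := by omega
  rw [hlen]
  have hterm : ∀ u ∈ range ((m - t) + 1),
      (m.choose (t + u) : ℝ) * ((t + u).choose t : ℝ) * (p⁻¹) ^ (t + u) * (-z) ^ (t + u - t) *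
          (1 + z) ^ (m - (t + u))
        = (m.choose t : ℝ) * (p⁻¹) ^ t *
            ((-z * p⁻¹) ^ u * (1 + z) ^ ((m - t) - u) * ((m - t).choose u : ℝ)) := by
    intro u hu
    have h := trin m (t + u) t (Nat.le_add_right t u)
    simp only [Nat.add_sub_cancel_left] at h
    have hcast : ((m.choose (t + u) : ℝ)) * ((t + u).choose t : ℝ)
        = (m.choose t : ℝ) * ((m - t).choose u : ℝ) := by
      exact_mod_cast congrArg Nat.cast h
    have h1 : t + u - t = u := by omega
    have h2 : m - (t + u) = (m - t) - u := by omega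
    rw [h1, h2, pow_add, mul_pow]
    calc (m.choose (t + u) : ℝ) * ((t + u).choose t : ℝ) * ((p⁻¹) ^ t * (p⁻¹) ^ u) * (-z) ^ u *
          (1 + z) ^ (m - t - u)
        = ((m.choose (t + u) : ℝ) * ((t + u).choose t : ℝ)) *
            ((p⁻¹) ^ t * (p⁻¹) ^ u * (-z) ^ u * (1 + z) ^ (m - t - u)) := by ring
      _ = ((m.choose t : ℝ) * ((m - t).choose u : ℝ)) *
            ((p⁻¹) ^ t * (p⁻¹) ^ u * (-z) ^ u * (1 + z) ^ (m - t - u)) := by rw [hcast]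
      _ = _ := by ring
  rw [Finset.sum_congr rfl hterm, ← Finset.mul_sum, ← add_pow (-z * p⁻¹) (1 + z) (m - t)]
  have hval : -z * p⁻¹ + (1 + z) = (p * (1 + z) - z) * p⁻¹ := by
    field_simp
    ring
  rw [hval, mul_pow]
  have hpow : (p⁻¹) ^ t * (p⁻¹) ^ (m - t) = (p⁻¹) ^ m := by
    rw [← pow_add]
    congr 1
    omega
  calc (m.choose t : ℝ) * (p⁻¹) ^ t * ((p * (1 + z) - z) ^ (m - t) * (p⁻¹) ^ (m - t))
      = (m.choose t : ℝ) * (p * (1 + z) - z) ^ (m - t) * ((p⁻¹) ^ t * (p⁻¹) ^ (m - t)) := by ring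
    _ = _ := by rw [hpow]

theorem krawtchouk_generating (N : ℕ) (hN : 0 < N) (m n : ℕ) (hm : m ≤ N) (hn : n ≤ N)
    (p q z : ℝ) (hp : p ≠ 0) (hq : q ≠ 0) (hz : z ≠ 0)
    (hpz : p - z + p * z ≠ 0) (hqz : q - z + q * z ≠ 0) (h1z : 1 + z ≠ 0) :
    ∑ x ∈ Finset.range (N + 1),
        (N.choose x : ℝ) * krawtchoukK m (x : ℝ) p N * krawtchoukK n (x : ℝ) q N * z ^ x =
      ((p - z + p * z) / p) ^ m * ((q - z + q * z) / q) ^ n *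
        (1 + z) ^ ((N : ℤ) - (m : ℤ) - (n : ℤ)) *
        krawtchoukK m (n : ℝ) (-((p - z + p * z) * (q - z + q * z)) / z) N := by
  set P : ℝ := -((p - z + p * z) * (q - z + q * z)) / z with hPdef
  have hP : P ≠ 0 := by
    apply div_ne_zero _ hz
    exact neg_ne_zero.2 (mul_ne_zero hpz hqz)
  -- LHS transformation
  have hL :
      ∑ x ∈ Finset.range (N + 1),
          (N.choose x : ℝ) * krawtchoukK m (x : ℝ) p N * krawtchoukK n (x : ℝ) q N * z ^ x
        = ∑ t ∈ range (N + 1), ∑ j ∈ range (m + 1), ∑ k ∈ range (n + 1),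
            ((-1 : ℝ) ^ j * (m.choose j : ℝ) / (N.choose j : ℝ) * (p⁻¹) ^ j) *
              ((-1 : ℝ) ^ k * (n.choose k : ℝ) / (N.choose k : ℝ) * (q⁻¹) ^ k) *
              ((N.choose j : ℝ) * (N.choose k : ℝ) * (j.choose t : ℝ) * (k.choose t : ℝ) /
                (N.choose t : ℝ) * z ^ (j + k - t) * (1 + z) ^ ((N : ℤ) - j - k)) := by
    calc ∑ x ∈ Finset.range (N + 1),
          (N.choose x : ℝ) * krawtchoukK m (x : ℝ) p N * krawtchoukK n (x : ℝ) q N * z ^ x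
        = ∑ x ∈ range (N + 1), ∑ j ∈ range (m + 1), ∑ k ∈ range (n + 1),
            ((-1 : ℝ) ^ j * (m.choose j : ℝ) / (N.choose j : ℝ) * (p⁻¹) ^ j) *
              ((-1 : ℝ) ^ k * (n.choose k : ℝ) / (N.choose k : ℝ) * (q⁻¹) ^ k) *
              ((N.choose x : ℝ) * (x.choose j : ℝ) * (x.choose k : ℝ) * z ^ x) := by
          refine Finset.sum_congr rfl fun x hx => ?_
          rw [kraw_eq m N x hm p hp, kraw_eq n N x hn q hq]
          rw [show (N.choose x : ℝ) *
              (∑ j ∈ range (m + 1), (-1 : ℝ) ^ j * (m.choose j : ℝ) * (x.choose j : ℝ) /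
                (N.choose j : ℝ) * (p⁻¹) ^ j) *
              (∑ k ∈ range (n + 1), (-1 : ℝ) ^ k * (n.choose k : ℝ) * (x.choose k : ℝ) /
                (N.choose k : ℝ) * (q⁻¹) ^ k) * z ^ x
            = (∑ j ∈ range (m + 1), (-1 : ℝ) ^ j * (m.choose j : ℝ) * (x.choose j : ℝ) /
                (N.choose j : ℝ) * (p⁻¹) ^ j) *
              (∑ k ∈ range (n + 1), (-1 : ℝ) ^ k * (n.choose k : ℝ) * (x.choose k : ℝ) /
                (N.choose k : ℝ) * (q⁻¹) ^ k) * ((N.choose x : ℝ) * z ^ x) from by ring]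
          rw [Finset.sum_mul_sum, Finset.sum_mul]
          refine Finset.sum_congr rfl fun j hj => ?_
          rw [Finset.sum_mul]
          refine Finset.sum_congr rfl fun k hk => ?_
          ring
      _ = ∑ j ∈ range (m + 1), ∑ k ∈ range (n + 1), ∑ x ∈ range (N + 1),
            ((-1 : ℝ) ^ j * (m.choose j : ℝ) / (N.choose j : ℝ) * (p⁻¹) ^ j) *
              ((-1 : ℝ) ^ k * (n.choose k : ℝ) / (N.choose k : ℝ) * (q⁻¹) ^ k) *
              ((N.choose x : ℝ) * (x.choose j : ℝ) * (x.choose k : ℝ) * z ^ x) := by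
          rw [Finset.sum_comm]
          exact Finset.sum_congr rfl fun j hj => Finset.sum_comm
      _ = ∑ j ∈ range (m + 1), ∑ k ∈ range (n + 1), ∑ t ∈ range (N + 1),
            ((-1 : ℝ) ^ j * (m.choose j : ℝ) / (N.choose j : ℝ) * (p⁻¹) ^ j) *
              ((-1 : ℝ) ^ k * (n.choose k : ℝ) / (N.choose k : ℝ) * (q⁻¹) ^ k) *
              ((N.choose j : ℝ) * (N.choose k : ℝ) * (j.choose t : ℝ) * (k.choose t : ℝ) /
                (N.choose t : ℝ) * z ^ (j + k - t) * (1 + z) ^ ((N : ℤ) - j - k)) := by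
          refine Finset.sum_congr rfl fun j hj => Finset.sum_congr rfl fun k hk => ?_
          simp only [Finset.mem_range] at hj hk
          conv_lhs => rw [← Finset.mul_sum]
          conv_rhs => rw [← Finset.mul_sum]
          rw [lemE N j k (by omega) (by omega) z h1z]
      _ = ∑ j ∈ range (m + 1), ∑ t ∈ range (N + 1), ∑ k ∈ range (n + 1),
            ((-1 : ℝ) ^ j * (m.choose j : ℝ) / (N.choose j : ℝ) * (p⁻¹) ^ j) *
              ((-1 : ℝ) ^ k * (n.choose k : ℝ) / (N.choose k : ℝ) * (q⁻¹) ^ k) *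
              ((N.choose j : ℝ) * (N.choose k : ℝ) * (j.choose t : ℝ) * (k.choose t : ℝ) /
                (N.choose t : ℝ) * z ^ (j + k - t) * (1 + z) ^ ((N : ℤ) - j - k)) :=
          Finset.sum_congr rfl fun j hj => Finset.sum_comm
      _ = _ := Finset.sum_comm
  rw [hL]
  -- RHS transformation
  have hR :
      ((p - z + p * z) / p) ^ m * ((q - z + q * z) / q) ^ n *
          (1 + z) ^ ((N : ℤ) - (m : ℤ) - (n : ℤ)) * krawtchoukK m (n : ℝ) P N
        = ∑ t ∈ range (m + 1),
            z ^ t * (1 + z) ^ ((N : ℤ) - (m : ℤ) - (n : ℤ)) / (N.choose t : ℝ) *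
              ((m.choose t : ℝ) * (p * (1 + z) - z) ^ (m - t) * (p⁻¹) ^ m) *
              ((n.choose t : ℝ) * (q * (1 + z) - z) ^ (n - t) * (q⁻¹) ^ n) := by
    rw [kraw_eq m N n hm P hP, Finset.mul_sum]
    refine Finset.sum_congr rfl fun t ht => ?_
    simp only [Finset.mem_range] at ht
    have htm : t ≤ m := by omega
    have hCNt : ((N.choose t : ℝ)) ≠ 0 := by
      exact_mod_cast (Nat.choose_pos (by omega : t ≤ N)).ne'
    rcases le_or_gt t n with htn | htn
    · have hPinv : P⁻¹ = z / (-((p - z + p * z) * (q - z + q * z))) := by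
        rw [hPdef, inv_div]
      have hApow : (p * (1 + z) - z) ^ (m - t)
          = (p - z + p * z) ^ m / (p - z + p * z) ^ t := by
        rw [show p * (1 + z) - z = p - z + p * z from by ring]
        exact pow_sub₀ _ hpz htm
      have hBpow : (q * (1 + z) - z) ^ (n - t)
          = (q - z + q * z) ^ n / (q - z + q * z) ^ t := by
        rw [show q * (1 + z) - z = q - z + q * z from by ring]
        exact pow_sub₀ _ hqz htn
      have hA : (p - z + p * z) ≠ 0 := hpz
      have hB : (q - z + q * z) ≠ 0 := hqz
      have hPt : ((-1 : ℝ)) ^ t * (P⁻¹) ^ t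
          = z ^ t / ((p - z + p * z) ^ t * (q - z + q * z) ^ t) := by
        rw [hPinv, div_pow, neg_pow ((p - z + p * z) * (q - z + q * z)) t, mul_pow]
        have hm1 : ((-1 : ℝ)) ^ t ≠ 0 := by positivity
        field_simp
      rw [show ((p - z + p * z) / p) ^ m * ((q - z + q * z) / q) ^ n *
            (1 + z) ^ ((N : ℤ) - (m : ℤ) - (n : ℤ)) *
            ((-1 : ℝ) ^ t * (m.choose t : ℝ) * (n.choose t : ℝ) / (N.choose t : ℝ) *
              (P⁻¹) ^ t)
          = ((p - z + p * z) / p) ^ m * ((q - z + q * z) / q) ^ n *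
            (1 + z) ^ ((N : ℤ) - (m : ℤ) - (n : ℤ)) *
            ((m.choose t : ℝ) * (n.choose t : ℝ) / (N.choose t : ℝ)) *
            ((-1 : ℝ) ^ t * (P⁻¹) ^ t) from by ring]
      rw [hPt, hApow, hBpow, div_pow, div_pow]
      field_simp
      have hpm : p ^ m * p⁻¹ ^ m = 1 := by rw [← mul_pow, mul_inv_cancel₀ hp, one_pow]
      have hqn : q ^ n * q⁻¹ ^ n = 1 := by rw [← mul_pow, mul_inv_cancel₀ hq, one_pow]
      linear_combination (-((m.choose t : ℝ) * (n.choose t : ℝ) * (q + q * z - z)⁻¹ ^ t *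
        (q + q * z - z) ^ n)) * hpm + (-((m.choose t : ℝ) * (n.choose t : ℝ) *
        (q + q * z - z)⁻¹ ^ t * (q + q * z - z) ^ n) * (p ^ m * p⁻¹ ^ m)) * hqn
    · have h0 : ((n.choose t : ℝ)) = 0 := by
        exact_mod_cast congrArg Nat.cast (Nat.choose_eq_zero_of_lt htn)
      rw [h0]
      ring
  rw [hR]
  -- expand RHS via lemD and compare
  have hR2 : ∀ t ∈ range (m + 1),
      z ^ t * (1 + z) ^ ((N : ℤ) - (m : ℤ) - (n : ℤ)) / (N.choose t : ℝ) *
          ((m.choose t : ℝ) * (p * (1 + z) - z) ^ (m - t) * (p⁻¹) ^ m) *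
          ((n.choose t : ℝ) * (q * (1 + z) - z) ^ (n - t) * (q⁻¹) ^ n)
        = ∑ j ∈ range (m + 1), ∑ k ∈ range (n + 1),
            z ^ t * (1 + z) ^ ((N : ℤ) - (m : ℤ) - (n : ℤ)) / (N.choose t : ℝ) *
              ((m.choose j : ℝ) * (j.choose t : ℝ) * (p⁻¹) ^ j * (-z) ^ (j - t) *
                (1 + z) ^ (m - j)) *
              ((n.choose k : ℝ) * (k.choose t : ℝ) * (q⁻¹) ^ k * (-z) ^ (k - t) *
                (1 + z) ^ (n - k)) := by
    intro t ht
    simp only [Finset.mem_range] at ht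
    have htm : t ≤ m := by omega
    rcases le_or_gt t n with htn | htn
    · rw [← lemD m t htm p z hp, ← lemD n t htn q z hq]
      rw [show z ^ t * (1 + z) ^ ((N : ℤ) - (m : ℤ) - (n : ℤ)) / (N.choose t : ℝ) *
            (∑ j ∈ range (m + 1),
              (m.choose j : ℝ) * (j.choose t : ℝ) * (p⁻¹) ^ j * (-z) ^ (j - t) *
                (1 + z) ^ (m - j)) *
            (∑ k ∈ range (n + 1),
              (n.choose k : ℝ) * (k.choose t : ℝ) * (q⁻¹) ^ k * (-z) ^ (k - t) *
                (1 + z) ^ (n - k))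
          = ((∑ j ∈ range (m + 1),
              (m.choose j : ℝ) * (j.choose t : ℝ) * (p⁻¹) ^ j * (-z) ^ (j - t) *
                (1 + z) ^ (m - j)) *
            (∑ k ∈ range (n + 1),
              (n.choose k : ℝ) * (k.choose t : ℝ) * (q⁻¹) ^ k * (-z) ^ (k - t) *
                (1 + z) ^ (n - k))) *
            (z ^ t * (1 + z) ^ ((N : ℤ) - (m : ℤ) - (n : ℤ)) / (N.choose t : ℝ)) from by
          ring]
      rw [Finset.sum_mul_sum, Finset.sum_mul]
      refine Finset.sum_congr rfl fun j hj => ?_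
      rw [Finset.sum_mul]
      refine Finset.sum_congr rfl fun k hk => ?_
      ring
    · have h0 : ((n.choose t : ℝ)) = 0 := by
        exact_mod_cast congrArg Nat.cast (Nat.choose_eq_zero_of_lt htn)
      rw [h0]
      rw [show z ^ t * (1 + z) ^ ((N : ℤ) - (m : ℤ) - (n : ℤ)) / (N.choose t : ℝ) *
          ((m.choose t : ℝ) * (p * (1 + z) - z) ^ (m - t) * (p⁻¹) ^ m) *
          ((0 : ℝ) * (q * (1 + z) - z) ^ (n - t) * (q⁻¹) ^ n) = 0 from by ring]
      symm
      refine Finset.sum_eq_zero fun j hj => Finset.sum_eq_zero fun k hk => ?_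
      simp only [Finset.mem_range] at hk
      have h1 : ((k.choose t : ℝ)) = 0 := by
        exact_mod_cast congrArg Nat.cast (Nat.choose_eq_zero_of_lt (by omega))
      rw [h1]
      ring
  rw [Finset.sum_congr rfl hR2]
  -- extend t-range on the RHS from m+1 to N+1
  rw [← Finset.sum_subset (Finset.range_subset_range.2 (by omega : m + 1 ≤ N + 1))
    (fun t ht hnt => ?_)]
  swap
  · simp only [Finset.mem_range] at ht hnt
    refine Finset.sum_eq_zero fun j hj => Finset.sum_eq_zero fun k hk => ?_
    simp only [Finset.mem_range] at hj
    have h1 : ((j.choose t : ℝ)) = 0 := by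
      exact_mod_cast congrArg Nat.cast (Nat.choose_eq_zero_of_lt (by omega))
    rw [h1]
    ring
  -- final termwise comparison
  refine Finset.sum_congr rfl fun t ht => Finset.sum_congr rfl fun j hj =>
    Finset.sum_congr rfl fun k hk => ?_
  simp only [Finset.mem_range] at ht hj hk
  have hjN : j ≤ N := by omega
  have hkN : k ≤ N := by omega
  rcases le_or_gt t j with htj | htj
  · rcases le_or_gt t k with htk | htk
    · -- main case
      have hCNj : ((N.choose j : ℝ)) ≠ 0 := by
        exact_mod_cast (Nat.choose_pos hjN).ne'
      have hCNk : ((N.choose k : ℝ)) ≠ 0 := by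
        exact_mod_cast (Nat.choose_pos hkN).ne'
      have hCNt : ((N.choose t : ℝ)) ≠ 0 := by
        exact_mod_cast (Nat.choose_pos (by omega : t ≤ N)).ne'
      have key1 : (-z) ^ (j - t) * (-z) ^ (k - t) * z ^ t
          = (-1 : ℝ) ^ j * (-1 : ℝ) ^ k * z ^ (j + k - t) := by
        rw [neg_pow z (j - t), neg_pow z (k - t)]
        have hz' : z ^ (j - t) * z ^ (k - t) * z ^ t = z ^ (j + k - t) := by
          rw [← pow_add, ← pow_add]
          congr 1
          omega
        have hs : ((-1 : ℝ)) ^ (j - t) * (-1 : ℝ) ^ (k - t) = (-1 : ℝ) ^ j * (-1 : ℝ) ^ k := by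
          have h1 : ((-1 : ℝ)) ^ (j - t) * (-1 : ℝ) ^ (k - t) * (-1 : ℝ) ^ (2 * t)
              = (-1 : ℝ) ^ (j + k) := by
            rw [← pow_add, ← pow_add]
            congr 1
            omega
          rw [pow_mul, neg_one_sq, one_pow, mul_one] at h1
          rw [h1, pow_add]
        calc ((-1 : ℝ) ^ (j - t) * z ^ (j - t)) * ((-1 : ℝ) ^ (k - t) * z ^ (k - t)) * z ^ t
            = ((-1 : ℝ) ^ (j - t) * (-1 : ℝ) ^ (k - t)) * (z ^ (j - t) * z ^ (k - t) * z ^ t) := by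
              ring
          _ = _ := by rw [hs, hz']
      have key2 : ((1 : ℝ) + z) ^ (m - j) * ((1 : ℝ) + z) ^ (n - k) *
          (1 + z) ^ ((N : ℤ) - (m : ℤ) - (n : ℤ)) = (1 + z) ^ ((N : ℤ) - j - k) := by
        rw [← zpow_natCast ((1 : ℝ) + z) (m - j), ← zpow_natCast ((1 : ℝ) + z) (n - k),
          ← zpow_add₀ h1z, ← zpow_add₀ h1z]
        congr 1
        omega
      rw [show z ^ t * (1 + z) ^ ((N : ℤ) - (m : ℤ) - (n : ℤ)) / (N.choose t : ℝ) *
          ((m.choose j : ℝ) * (j.choose t : ℝ) * (p⁻¹) ^ j * (-z) ^ (j - t) *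
            (1 + z) ^ (m - j)) *
          ((n.choose k : ℝ) * (k.choose t : ℝ) * (q⁻¹) ^ k * (-z) ^ (k - t) *
            (1 + z) ^ (n - k))
        = (m.choose j : ℝ) * (j.choose t : ℝ) * (n.choose k : ℝ) * (k.choose t : ℝ) /
            (N.choose t : ℝ) * (p⁻¹) ^ j * (q⁻¹) ^ k *
            ((-z) ^ (j - t) * (-z) ^ (k - t) * z ^ t) *
            (((1 : ℝ) + z) ^ (m - j) * ((1 : ℝ) + z) ^ (n - k) *
              (1 + z) ^ ((N : ℤ) - (m : ℤ) - (n : ℤ))) from by ring]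
      rw [key1, key2]
      field_simp
    · have h1 : ((k.choose t : ℝ)) = 0 := by
        exact_mod_cast congrArg Nat.cast (Nat.choose_eq_zero_of_lt htk)
      rw [h1]
      ring
  · have h1 : ((j.choose t : ℝ)) = 0 := by
      exact_mod_cast congrArg Nat.cast (Nat.choose_eq_zero_of_lt htj)
    rw [h1]
    ring
end
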